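/- arXiv:1007.2664 — 5 statements merged into one kernel-verified Lean document; each statement's English description precedes it below -/
import Mathlib

section
/- Let (τ_k)_{k≥1} be i.i.d. strictly positive random variables with finite mean μ = E(τ₁) (the variance may be infinite). Let S₀ ≥ 0 be fixed, S_k = S₀ + τ₁ + ⋯ + τ_k, and N_t = Σ_{k≥1} 1(S_k ≤ t). Then N_t/t converges to 1/μ in L², i.e. lim_{t→∞} E((N_t/t − 1/μ)²) = 0. -/
open MeasureTheory ProbabilityTheory Filter
open scoped ENNReal NNReal Topology

private lemma count_exists (s : ℕ → ℝ) (hs : StrictMono s) (t : ℝ) (hK : ∃ K, t < s K) :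
    ∃ n : ℕ, (∀ k : ℕ, 1 ≤ k → (s k ≤ t ↔ k ≤ n)) ∧ t < s (n + 1) := by
  obtain ⟨K, hKt⟩ := hK
  have h' : ∃ k, t < s (k + 1) := ⟨K, lt_of_lt_of_le hKt (hs.monotone (Nat.le_succ K))⟩
  refine ⟨Nat.find h', fun k hk => ?_, Nat.find_spec h'⟩
  constructor
  · intro hsk
    by_contra hkn
    push_neg at hkn
    have h2 : Nat.find h' + 1 ≤ k := hkn
    have := hs.monotone h2
    have := Nat.find_spec h'
    linarith
  · intro hkn
    have h2 : ¬ t < s ((k - 1) + 1) := Nat.find_min h' (by omega)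
    have h3 : (k - 1) + 1 = k := by omega
    rw [h3] at h2
    linarith

private lemma tele_sum (m : ℕ) :
    ∑ k ∈ Finset.range m, ((k + 1) ^ 4 - k ^ 4 : ℕ) = m ^ 4 := by
  induction m with
  | zero => simp
  | succ m ih =>
    rw [Finset.sum_range_succ, ih]
    have : m ^ 4 ≤ (m + 1) ^ 4 := Nat.pow_le_pow_left (Nat.le_succ m) 4
    omega

private lemma pow4_le_tsum (x : ℝ≥0∞) :
    x ^ 4 ≤ ∑' k : ℕ, (((k + 1) ^ 4 - k ^ 4 : ℕ) : ℝ≥0∞) * (if (k : ℝ≥0∞) ≤ x then 1 else 0) := by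
  have hone : ∀ k : ℕ, (1 : ℕ) ≤ (k + 1) ^ 4 - k ^ 4 := by
    intro k
    have : k ^ 4 < (k + 1) ^ 4 := Nat.pow_lt_pow_left (Nat.lt_succ_self k) (by norm_num)
    omega
  have htel : ∀ m : ℕ, ∑ k ∈ Finset.range m, (((k + 1) ^ 4 - k ^ 4 : ℕ) : ℝ≥0∞) = (m : ℝ≥0∞) ^ 4 := by
    intro m
    rw [← Nat.cast_sum, tele_sum]
    push_cast
    ring
  rcases eq_or_ne x ⊤ with hx | hx
  · subst hx
    simp only [le_top, if_true, mul_one]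
    have h1 : ∑' _ : ℕ, (1 : ℝ≥0∞) ≤ ∑' k : ℕ, (((k + 1) ^ 4 - k ^ 4 : ℕ) : ℝ≥0∞) :=
      ENNReal.tsum_le_tsum fun k => by exact_mod_cast hone k
    rw [ENNReal.tsum_const_eq_top_of_ne_zero one_ne_zero] at h1
    exact le_trans (le_of_eq (by simp)) h1
  · set n := Nat.floor x.toReal with hn
    have hxn : x ≤ ((n + 1 : ℕ) : ℝ≥0∞) := by
      have h1 : x.toReal < (n : ℝ) + 1 := Nat.lt_floor_add_one _
      have h2 : x = ENNReal.ofReal x.toReal := (ENNReal.ofReal_toReal hx).symm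
      rw [h2]
      refine le_trans (ENNReal.ofReal_le_ofReal h1.le) ?_
      rw [← ENNReal.ofReal_natCast (n + 1)]
      push_cast
      exact le_refl _
    have hnx : ∀ k : ℕ, k ≤ n → (k : ℝ≥0∞) ≤ x := by
      intro k hkn
      have h1 : (k : ℝ) ≤ x.toReal := le_trans (by exact_mod_cast hkn) (Nat.floor_le ENNReal.toReal_nonneg)
      have h2 : x = ENNReal.ofReal x.toReal := (ENNReal.ofReal_toReal hx).symm
      rw [h2, ← ENNReal.ofReal_natCast k]
      exact ENNReal.ofReal_le_ofReal h1
    calc x ^ 4 ≤ ((n + 1 : ℕ) : ℝ≥0∞) ^ 4 := by gcongr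
      _ = ∑ k ∈ Finset.range (n + 1), (((k + 1) ^ 4 - k ^ 4 : ℕ) : ℝ≥0∞) := (htel (n + 1)).symm
      _ = ∑ k ∈ Finset.range (n + 1),
            (((k + 1) ^ 4 - k ^ 4 : ℕ) : ℝ≥0∞) * (if (k : ℝ≥0∞) ≤ x then 1 else 0) := by
          refine Finset.sum_congr rfl fun k hk => ?_
          rw [if_pos (hnx k (by simpa [Nat.lt_succ_iff] using Finset.mem_range.mp hk)), mul_one]
      _ ≤ _ := ENNReal.sum_le_tsum _

private lemma vitali_aux {Ω : Type*} [MeasurableSpace Ω] (P : Measure Ω) [IsProbabilityMeasure P]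
    (f : ℕ → Ω → ℝ) (hmf : ∀ n, AEStronglyMeasurable (f n) P)
    (h0 : ∀ n, ∀ᵐ ω ∂P, 0 ≤ f n ω)
    (hint2 : ∀ n, Integrable (fun ω => (f n ω) ^ 2) P)
    (C : ℝ) (hC : ∀ n, ∫ ω, (f n ω) ^ 2 ∂P ≤ C)
    (hae : ∀ᵐ ω ∂P, Tendsto (fun n => f n ω) atTop (𝓝 0)) :
    Tendsto (fun n => ∫ ω, f n ω ∂P) atTop (𝓝 0) := by
  have hCnn : 0 ≤ C := le_trans (integral_nonneg fun ω => sq_nonneg _) (hC 0)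
  have hintf : ∀ n, Integrable (f n) P := by
    intro n
    refine ((integrable_const (1 : ℝ)).add (hint2 n)).mono (hmf n) ?_
    refine Eventually.of_forall fun ω => ?_
    rw [Real.norm_eq_abs, Real.norm_eq_abs]
    have h1 : |f n ω| ≤ 1 + (f n ω) ^ 2 := by nlinarith [abs_nonneg (f n ω), sq_abs (f n ω)]
    have h2 : (0:ℝ) ≤ 1 + (f n ω) ^ 2 := by positivity
    calc |f n ω| ≤ 1 + (f n ω) ^ 2 := h1
      _ = |1 + (f n ω) ^ 2| := (abs_of_nonneg h2).symm
  rw [tendsto_order]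
  constructor
  · intro a ha
    exact Eventually.of_forall fun n => lt_of_lt_of_le ha (integral_nonneg_of_ae (h0 n))
  · intro b hb
    set K : ℝ := max (2 * C / b) 1 with hK
    have hKpos : (0:ℝ) < K := lt_of_lt_of_le one_pos (le_max_right _ _)
    have hmin_meas : ∀ n, AEStronglyMeasurable (fun ω => min (f n ω) K) P := fun n =>
      ((hmf n).aemeasurable.min aemeasurable_const).aestronglyMeasurable
    have hmin_int : ∀ n, Integrable (fun ω => min (f n ω) K) P := by
      intro n
      refine (hintf n).mono (hmin_meas n) ?_
      filter_upwards [h0 n] with ω h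
      rw [Real.norm_eq_abs, Real.norm_eq_abs, abs_of_nonneg (le_min h hKpos.le),
        abs_of_nonneg h]
      exact min_le_left _ _
    have key : ∀ n, ∫ ω, f n ω ∂P ≤ (∫ ω, min (f n ω) K ∂P) + C / K := by
      intro n
      have hpt : ∀ᵐ ω ∂P, f n ω ≤ min (f n ω) K + (f n ω) ^ 2 / K := by
        filter_upwards [h0 n] with ω h
        rcases le_total (f n ω) K with h' | h'
        · rw [min_eq_left h']
          have : (0:ℝ) ≤ (f n ω) ^ 2 / K := by positivity
          linarith
        · rw [min_eq_right h']
          have h4 : f n ω ≤ (f n ω) ^ 2 / K := by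
            rw [le_div_iff₀ hKpos]; nlinarith
          linarith
      calc ∫ ω, f n ω ∂P ≤ ∫ ω, (min (f n ω) K + (f n ω) ^ 2 / K) ∂P :=
            integral_mono_ae (hintf n) ((hmin_int n).add ((hint2 n).div_const K)) hpt
        _ = (∫ ω, min (f n ω) K ∂P) + (∫ ω, (f n ω) ^ 2 ∂P) / K := by
            rw [integral_add (hmin_int n) ((hint2 n).div_const K), integral_div]
        _ ≤ (∫ ω, min (f n ω) K ∂P) + C / K := by
            gcongr
            exact hC n
    have hCK : C / K ≤ b / 2 := by
      have h1 : 2 * C / b ≤ K := le_max_left _ _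
      rw [div_le_iff₀ hKpos]
      have h2 : 2 * C / b * (b / 2) ≤ K * (b / 2) := by
        apply mul_le_mul_of_nonneg_right h1
        linarith
      have h3 : 2 * C / b * (b / 2) = C := by field_simp
      linarith
    have hdct : Tendsto (fun n => ∫ ω, min (f n ω) K ∂P) atTop (𝓝 0) := by
      have h0' : ∫ ω, (0:ℝ) ∂P = 0 := integral_zero _ _
      have := tendsto_integral_of_dominated_convergence (μ := P)
        (F := fun n ω => min (f n ω) K) (f := fun _ => (0:ℝ))
        (fun _ => K) hmin_meas (integrable_const K) ?_ ?_
      · rw [h0'] at this; exact this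
      · intro n
        filter_upwards [h0 n] with ω h
        rw [Real.norm_eq_abs, abs_of_nonneg (le_min h hKpos.le)]
        exact min_le_right _ _
      · filter_upwards [hae] with ω hω
        have h1 : Tendsto (fun n => min (f n ω) K) atTop (𝓝 (min 0 K)) :=
          hω.min tendsto_const_nhds
        rwa [min_eq_left hKpos.le] at h1
    have hev : ∀ᶠ n in atTop, ∫ ω, min (f n ω) K ∂P < b / 2 :=
      hdct.eventually (eventually_lt_nhds (by linarith))
    filter_upwards [hev] with n hn
    calc ∫ ω, f n ω ∂P ≤ (∫ ω, min (f n ω) K ∂P) + C / K := key n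
      _ < b / 2 + b / 2 := by linarith
      _ = b := by ring
set_option maxHeartbeats 1000000 in
/-- Renewal theorem in `L²`: for i.i.d. strictly positive inter-arrival times with
finite mean `μ` (possibly infinite variance), the counting process satisfies
`N_t/t → 1/μ` in `L²`. -/
theorem renewal_counting_L2
    {Ω : Type*} [MeasurableSpace Ω] (P : Measure Ω) [IsProbabilityMeasure P]
    (τ : ℕ → Ω → ℝ) (hmeas : ∀ k, Measurable (τ k))
    (hindep : iIndepFun τ P)
    (hident : ∀ k, Measure.map (τ k) P = Measure.map (τ 0) P)
    (hpos : ∀ k, ∀ᵐ ω ∂P, 0 < τ k ω)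
    (hint : Integrable (τ 0) P)
    (μ : ℝ) (hμ : μ = ∫ ω, τ 0 ω ∂P)
    (S₀ : ℝ) (hS₀ : 0 ≤ S₀)
    (S : ℕ → Ω → ℝ) (hS : ∀ k ω, S k ω = S₀ + ∑ i ∈ Finset.range k, τ i ω)
    (N : ℝ → Ω → ℕ) (hN : ∀ t ω, N t ω = Set.ncard {k : ℕ | 1 ≤ k ∧ S k ω ≤ t}) :
    Tendsto (fun t : ℝ => ∫ ω, ((N t ω : ℝ) / t - 1 / μ) ^ 2 ∂P) atTop (nhds 0) := by
  -- μ is positive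
  have hms0 : MeasurableSet {ω | 0 < τ 0 ω} := measurableSet_lt measurable_const (hmeas 0)
  have hP0 : P {ω | 0 < τ 0 ω} = 1 := by
    have h1 : P {ω | ¬ (0 < τ 0 ω)} = 0 := by
      rw [← ae_iff]; exact hpos 0
    have h2 : {ω | ¬ (0 < τ 0 ω)} = {ω | 0 < τ 0 ω}ᶜ := rfl
    rw [h2] at h1
    rw [← prob_compl_eq_zero_iff hms0]
    exact h1
  have hμpos : 0 < μ := by
    rw [hμ]
    rw [integral_pos_iff_support_of_nonneg_ae
      (by filter_upwards [hpos 0] with ω h using h.le) hint]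
    have h1 : {ω | 0 < τ 0 ω} ⊆ Function.support (τ 0) := fun ω h => ne_of_gt h
    calc (0:ℝ≥0∞) < 1 := by norm_num
      _ = P {ω | 0 < τ 0 ω} := hP0.symm
      _ ≤ P (Function.support (τ 0)) := measure_mono h1
  -- choose ε with P(τ₀ ≥ ε) ≥ 1/2
  obtain ⟨ε, hεpos, hδ⟩ : ∃ ε : ℝ, 0 < ε ∧ ENNReal.ofReal (1/2) ≤ P {ω | ε ≤ τ 0 ω} := by
    have hmono : Monotone (fun n : ℕ => {ω | 1/((n:ℝ)+1) ≤ τ 0 ω}) := by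
      intro a b hab ω h
      have hle : ((a:ℝ)+1) ≤ (b:ℝ)+1 := by
        have : (a:ℝ) ≤ b := by exact_mod_cast hab
        linarith
      exact le_trans (one_div_le_one_div_of_le (by positivity) hle) h
    have hunion : (⋃ n : ℕ, {ω | 1/((n:ℝ)+1) ≤ τ 0 ω}) = {ω | 0 < τ 0 ω} := by
      ext ω
      simp only [Set.mem_iUnion, Set.mem_setOf_eq]
      constructor
      · rintro ⟨n, hn⟩
        have : (0:ℝ) < 1/((n:ℝ)+1) := by positivity
        linarith
      · intro h
        obtain ⟨n, hn⟩ := exists_nat_one_div_lt h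
        exact ⟨n, hn.le⟩
    have htend := tendsto_measure_iUnion_atTop (μ := P)
      (s := fun n : ℕ => {ω | 1/((n:ℝ)+1) ≤ τ 0 ω}) hmono
    rw [hunion, hP0] at htend
    have hlt : ENNReal.ofReal (1/2) < 1 := by
      rw [← ENNReal.ofReal_one]
      exact ENNReal.ofReal_lt_ofReal_iff_of_nonneg (by norm_num) |>.mpr (by norm_num)
    obtain ⟨n, hn⟩ := (htend.eventually (eventually_ge_nhds hlt)).exists
    exact ⟨1/((n:ℝ)+1), by positivity, hn⟩
  -- measurable counting function
  set G : ℝ → Ω → ℝ≥0∞ := fun t ω => ∑' k : ℕ, (if 1 ≤ k ∧ S k ω ≤ t then (1:ℝ≥0∞) else 0)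
    with hGdef
  set g : ℝ → Ω → ℝ := fun t ω => (G t ω).toReal with hgdef
  have hSmeasfun : ∀ k, Measurable (S k) := by
    intro k
    have h1 : S k = fun ω => S₀ + ∑ i ∈ Finset.range k, τ i ω := funext (hS k)
    rw [h1]
    exact measurable_const.add (Finset.measurable_sum _ fun i _ => hmeas i)
  have hGmeas : ∀ t, Measurable (G t) := by
    intro t
    apply Measurable.ennreal_tsum
    intro k
    by_cases hk : 1 ≤ k
    · simp only [hk, true_and]
      exact Measurable.ite (measurableSet_le (hSmeasfun k) measurable_const)
        measurable_const measurable_const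
    · simp [hk]
  have hgmeas : ∀ t, Measurable (g t) := fun t => (hGmeas t).ennreal_toReal
  -- strong law of large numbers
  have hpair : Pairwise (Function.onFun (fun f g => IndepFun f g P) τ) := fun i j hij => hindep.indepFun hij
  have hid : ∀ i, IdentDistrib (τ i) (τ 0) P P := fun i =>
    ⟨(hmeas i).aemeasurable, (hmeas 0).aemeasurable, hident i⟩
  have hslln : ∀ᵐ ω ∂P,
      Tendsto (fun n : ℕ => (∑ i ∈ Finset.range n, τ i ω) / n) atTop (𝓝 μ) := by
    have := strong_law_ae_real τ hint hpair hid
    rw [← hμ] at this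
    exact this
  -- the main a.e. package
  have main_ae : ∀ᵐ ω ∂P,
      (∀ t : ℝ, ∃ n : ℕ, ((N t ω : ℝ) = g t ω) ∧ G t ω = (n : ℝ≥0∞) ∧
        (∀ k : ℕ, 1 ≤ k → (S k ω ≤ t ↔ k ≤ n))) ∧
      Tendsto (fun t : ℝ => g t ω / t) atTop (𝓝 (1/μ)) := by
    filter_upwards [ae_all_iff.mpr hpos, hslln] with ω hposω hsllnω
    have hmono : StrictMono (fun k => S k ω) := by
      apply strictMono_nat_of_lt_succ
      intro k
      have h1 : S (k+1) ω = S k ω + τ k ω := by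
        rw [hS, hS, Finset.sum_range_succ]; ring
      have := hposω k
      simp only [h1]
      linarith
    have hdivk : Tendsto (fun k : ℕ => S k ω / k) atTop (𝓝 μ) := by
      have h1 : Tendsto (fun k : ℕ => S₀ / k + (∑ i ∈ Finset.range k, τ i ω) / k)
          atTop (𝓝 (0 + μ)) :=
        (tendsto_const_div_atTop_nhds_zero_nat S₀).add hsllnω
      rw [zero_add] at h1
      refine h1.congr fun k => ?_
      rw [hS, add_div]
    have hstop : Tendsto (fun k : ℕ => S k ω) atTop atTop := by
      have hev : ∀ᶠ k : ℕ in atTop, (k:ℝ) * (μ/2) ≤ S k ω := by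
        have h2 : ∀ᶠ k : ℕ in atTop, μ/2 ≤ S k ω / k :=
          hdivk.eventually (eventually_ge_nhds (by linarith))
        filter_upwards [h2, eventually_ge_atTop 1] with k hk hk1
        have hkpos : (0:ℝ) < k := by exact_mod_cast hk1
        calc (k:ℝ) * (μ/2) ≤ (k:ℝ) * (S k ω / k) := by
              exact mul_le_mul_of_nonneg_left hk hkpos.le
          _ = S k ω := by field_simp
      exact tendsto_atTop_mono' _ hev
        (tendsto_natCast_atTop_atTop.atTop_mul_const (by linarith))
    have hexist : ∀ t : ℝ, ∃ K, t < S K ω :=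
      fun t => (hstop.eventually (eventually_gt_atTop t)).exists
    choose nn hnn1 hnn2 using fun t => count_exists (fun k => S k ω) hmono t (hexist t)
    have hicc : ∀ t (k : ℕ), (1 ≤ k ∧ S k ω ≤ t) ↔ k ∈ Finset.Icc 1 (nn t) := by
      intro t k
      rw [Finset.mem_Icc]
      constructor
      · rintro ⟨h1, h2⟩; exact ⟨h1, (hnn1 t k h1).mp h2⟩
      · rintro ⟨h1, h2⟩; exact ⟨h1, (hnn1 t k h1).mpr h2⟩
    have hGeq : ∀ t, G t ω = ((nn t : ℕ) : ℝ≥0∞) := by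
      intro t
      have h2 : G t ω = ∑ k ∈ Finset.Icc 1 (nn t),
          (if 1 ≤ k ∧ S k ω ≤ t then (1:ℝ≥0∞) else 0) := by
        apply tsum_eq_sum
        intro k hk
        exact if_neg (fun hc => hk ((hicc t k).mp hc))
      rw [h2, Finset.sum_congr rfl (fun k hk => if_pos ((hicc t k).mpr hk)),
        Finset.sum_const, Nat.card_Icc]
      simp
    have hgnn : ∀ t, g t ω = (nn t : ℝ) := by
      intro t
      simp only [hgdef, hGeq t, ENNReal.toReal_natCast]
    have hNeq : ∀ t, (N t ω : ℝ) = g t ω := by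
      intro t
      have hset : {k : ℕ | 1 ≤ k ∧ S k ω ≤ t} = ↑(Finset.Icc 1 (nn t)) := by
        ext k
        rw [Finset.mem_coe, Set.mem_setOf_eq]
        exact hicc t k
      rw [hN, hset, Set.ncard_coe_finset, Nat.card_Icc, hgnn t]
      simp
    refine ⟨fun t => ⟨nn t, hNeq t, hGeq t, hnn1 t⟩, ?_⟩
    have hntop : Tendsto nn atTop atTop := by
      rw [tendsto_atTop]
      intro m
      filter_upwards [eventually_ge_atTop (S (max m 1) ω)] with t ht
      exact le_trans (le_max_left m 1) ((hnn1 t (max m 1) (le_max_right m 1)).mp ht)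
    have hnn_ge1 : ∀ᶠ t : ℝ in atTop, 1 ≤ nn t := hntop.eventually (eventually_ge_atTop 1)
    have hSle : ∀ᶠ t : ℝ in atTop, S (nn t) ω ≤ t := by
      filter_upwards [hnn_ge1] with t ht
      exact (hnn1 t (nn t) ht).mpr le_rfl
    have comp1 : Tendsto (fun t : ℝ => S (nn t) ω / (nn t : ℝ)) atTop (𝓝 μ) :=
      hdivk.comp hntop
    have hntop1 : Tendsto (fun t : ℝ => nn t + 1) atTop atTop :=
      (tendsto_add_atTop_nat 1).comp hntop
    have comp2 : Tendsto (fun t : ℝ => S (nn t + 1) ω / ((nn t + 1 : ℕ) : ℝ)) atTop (𝓝 μ) :=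
      hdivk.comp hntop1
    have ratio : Tendsto (fun t : ℝ => ((nn t : ℝ) + 1) / (nn t : ℝ)) atTop (𝓝 1) := by
      have h1 : Tendsto (fun k : ℕ => 1 + 1/(k:ℝ)) atTop (𝓝 (1 + 0)) :=
        tendsto_const_nhds.add tendsto_one_div_atTop_nhds_zero_nat
      rw [add_zero] at h1
      refine (h1.comp hntop).congr' ?_
      filter_upwards [hnn_ge1] with t ht
      have h2 : (0:ℝ) < (nn t : ℝ) := by exact_mod_cast ht
      rw [Function.comp_apply]
      field_simp
    have upper : Tendsto (fun t : ℝ => S (nn t + 1) ω / (nn t : ℝ)) atTop (𝓝 μ) := by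
      have h1 : Tendsto (fun t : ℝ =>
          (S (nn t + 1) ω / ((nn t + 1 : ℕ) : ℝ)) * (((nn t : ℝ) + 1) / (nn t : ℝ)))
          atTop (𝓝 (μ * 1)) := comp2.mul ratio
      rw [mul_one] at h1
      refine h1.congr' ?_
      filter_upwards [hnn_ge1] with t ht
      have h2 : (0:ℝ) < (nn t : ℝ) := by exact_mod_cast ht
      have h3 : ((nn t : ℝ) + 1) ≠ 0 := by positivity
      push_cast
      field_simp
    have hsq : Tendsto (fun t : ℝ => t / (nn t : ℝ)) atTop (𝓝 μ) := by
      refine tendsto_of_tendsto_of_tendsto_of_le_of_le' comp1 upper ?_ ?_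
      · filter_upwards [hSle, hnn_ge1] with t h1 h2
        have h3 : (0:ℝ) < (nn t : ℝ) := by exact_mod_cast h2
        gcongr
      · filter_upwards [hnn_ge1] with t ht
        have h2 : (0:ℝ) < (nn t : ℝ) := by exact_mod_cast ht
        have h3 := (hnn2 t).le
        gcongr
    have hinv : Tendsto (fun t : ℝ => (nn t : ℝ) / t) atTop (𝓝 μ⁻¹) := by
      have h1 := hsq.inv₀ (ne_of_gt hμpos)
      refine h1.congr fun t => ?_
      rw [inv_div]
    rw [one_div]
    refine hinv.congr' ?_
    filter_upwards [] with t
    rw [hgnn t]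
  -- Bernoulli-type auxiliary variables for the tail bound
  set r : ℝ≥0∞ := ENNReal.ofReal (Real.exp (-1)) with hrdef
  set φ : ℝ → ℝ≥0∞ := fun x => if ε ≤ x then r else 1 with hφdef
  have hφmeas : Measurable φ :=
    Measurable.ite measurableSet_Ici measurable_const measurable_const
  set z : ℕ → Ω → ℝ≥0∞ := fun i => φ ∘ τ i with hzdef
  have hzmeas : ∀ i, Measurable (z i) := fun i => hφmeas.comp (hmeas i)
  have hzindep : iIndepFun z P :=
    hindep.comp (fun _ => φ) (fun _ => hφmeas)
  set ρ : ℝ≥0∞ := ENNReal.ofReal (9/10) with hρdef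
  have hzint : ∀ i, ∫⁻ ω, z i ω ∂P ≤ ρ := by
    intro i
    have hA : MeasurableSet {ω | ε ≤ τ i ω} := (hmeas i) measurableSet_Ici
    have hup : ∀ ω, z i ω ≤ ({ω | ε ≤ τ i ω}ᶜ).indicator (1 : Ω → ℝ≥0∞) ω + r := by
      intro ω
      by_cases h : ε ≤ τ i ω
      · have h1 : z i ω = r := if_pos h
        rw [h1]
        exact le_add_self
      · have h1 : z i ω = 1 := if_neg h
        rw [h1, Set.indicator_of_mem (by simpa using h)]
        exact le_add_right le_rfl
    calc ∫⁻ ω, z i ω ∂P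
        ≤ ∫⁻ ω, (({ω | ε ≤ τ i ω}ᶜ).indicator (1 : Ω → ℝ≥0∞) ω + r) ∂P :=
          lintegral_mono hup
      _ = P ({ω | ε ≤ τ i ω}ᶜ) + r := by
          rw [lintegral_add_right _ measurable_const, lintegral_indicator_one hA.compl,
            lintegral_const, measure_univ, mul_one]
      _ ≤ ENNReal.ofReal (1/2) + ENNReal.ofReal (2/5) := by
          gcongr
          · rw [prob_compl_eq_one_sub hA]
            have h2 : P {ω | ε ≤ τ i ω} = P {ω | ε ≤ τ 0 ω} := by
              have e1 : {ω | ε ≤ τ i ω} = τ i ⁻¹' (Set.Ici ε) := rfl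
              have e2 : {ω | ε ≤ τ 0 ω} = τ 0 ⁻¹' (Set.Ici ε) := rfl
              rw [e1, e2, ← Measure.map_apply (hmeas i) measurableSet_Ici,
                ← Measure.map_apply (hmeas 0) measurableSet_Ici, hident i]
            calc 1 - P {ω | ε ≤ τ i ω} ≤ 1 - ENNReal.ofReal (1/2) :=
                  tsub_le_tsub_left (h2 ▸ hδ) 1
              _ = ENNReal.ofReal (1/2) := by
                  rw [← ENNReal.ofReal_one, ← ENNReal.ofReal_sub _ (by norm_num)]
                  norm_num
          · rw [hrdef]
            apply ENNReal.ofReal_le_ofReal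
            rw [Real.exp_neg]
            have h1 : (5/2 : ℝ) ≤ Real.exp 1 :=
              le_of_lt (lt_trans (by norm_num) Real.exp_one_gt_d9)
            calc (Real.exp 1)⁻¹ ≤ ((5:ℝ)/2)⁻¹ := by
                  apply inv_anti₀ (by norm_num) h1
              _ = 2/5 := by norm_num
      _ = ρ := by
          rw [hρdef, ← ENNReal.ofReal_add (by norm_num) (by norm_num)]
          norm_num
  have hprodmeas : ∀ k, Measurable (fun ω => ∏ i ∈ Finset.range k, z i ω) := fun k =>
    Finset.measurable_prod _ (fun i _ => hzmeas i)
  have hprod : ∀ k : ℕ, ∫⁻ ω, (∏ i ∈ Finset.range k, z i ω) ∂P ≤ ρ ^ k := by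
    intro k
    induction k with
    | zero => simp [lintegral_one, measure_univ]
    | succ k ih =>
      have hind : IndepFun (fun ω => ∏ i ∈ Finset.range k, z i ω) (z k) P := by
        have h := hzindep.indepFun_prod_range_succ hzmeas k
        have e : (∏ j ∈ Finset.range k, z j) = fun ω => ∏ j ∈ Finset.range k, z j ω := by
          funext ω
          exact Finset.prod_apply ω (Finset.range k) z
        rwa [e] at h
      have heq : ∫⁻ ω, (∏ i ∈ Finset.range (k+1), z i ω) ∂P
          = (∫⁻ ω, (∏ i ∈ Finset.range k, z i ω) ∂P) * ∫⁻ ω, z k ω ∂P := by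
        rw [← lintegral_mul_eq_lintegral_mul_lintegral_of_indepFun (hprodmeas k) (hzmeas k) hind]
        refine lintegral_congr fun ω => ?_
        rw [Finset.prod_range_succ]
        rfl
      rw [heq, pow_succ]
      exact mul_le_mul' ih (hzint k)
  -- a.e. relation between G and S
  have hSG : ∀ᵐ ω ∂P, ∀ (t : ℝ) (k : ℕ), 1 ≤ k → (k : ℝ≥0∞) ≤ G t ω → S k ω ≤ t := by
    filter_upwards [main_ae] with ω hω t k hk hkG
    obtain ⟨n, _, hGn, hiff⟩ := hω.1 t
    rw [hGn, Nat.cast_le] at hkG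
    exact (hiff k hk).mpr hkG
  -- the tail bound
  have htail : ∀ (t : ℝ) (k : ℕ), 1 ≤ k →
      P {ω | (k : ℝ≥0∞) ≤ G t ω} ≤ ENNReal.ofReal (Real.exp (t/ε)) * ρ ^ k := by
    intro t k hk
    set w : ℝ≥0∞ := ENNReal.ofReal (Real.exp (-(t/ε))) with hwdef
    have hsub : {ω | (k:ℝ≥0∞) ≤ G t ω} ≤ᵐ[P] {ω | w ≤ ∏ i ∈ Finset.range k, z i ω} := by
      filter_upwards [hSG, ae_all_iff.mpr hpos] with ω h1 h2
      intro hmem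
      have hSkt : S k ω ≤ t := h1 t k hk hmem
      have hsum : ∑ i ∈ Finset.range k, τ i ω ≤ t := by
        have h3 := hS k ω
        linarith
      set m := ((Finset.range k).filter (fun i => ε ≤ τ i ω)).card with hmdef
      have hεm : ε * (m:ℝ) ≤ t := by
        have h3 : (m:ℝ) * ε = ∑ _i ∈ (Finset.range k).filter (fun i => ε ≤ τ i ω), ε := by
          rw [Finset.sum_const, nsmul_eq_mul]
        have h4 : ∑ i ∈ (Finset.range k).filter (fun i => ε ≤ τ i ω), ε
            ≤ ∑ i ∈ (Finset.range k).filter (fun i => ε ≤ τ i ω), τ i ω :=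
          Finset.sum_le_sum fun i hi => (Finset.mem_filter.mp hi).2
        have h5 : ∑ i ∈ (Finset.range k).filter (fun i => ε ≤ τ i ω), τ i ω
            ≤ ∑ i ∈ Finset.range k, τ i ω :=
          Finset.sum_le_sum_of_subset_of_nonneg (Finset.filter_subset _ _)
            (fun i _ _ => (h2 i).le)
        have h6 : ε * (m:ℝ) = (m:ℝ) * ε := mul_comm _ _
        linarith
      have hprodeq : ∏ i ∈ Finset.range k, z i ω = ENNReal.ofReal (Real.exp (-(m:ℝ))) := by
        have h7 : ∀ i, z i ω = if ε ≤ τ i ω then r else 1 := fun i => rfl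
        calc ∏ i ∈ Finset.range k, z i ω
            = ∏ i ∈ Finset.range k, (if ε ≤ τ i ω then r else 1) :=
              Finset.prod_congr rfl fun i _ => h7 i
          _ = r ^ m := by
              rw [Finset.prod_ite, Finset.prod_const, Finset.prod_const_one, mul_one]
          _ = ENNReal.ofReal (Real.exp (-1) ^ m) := by
              rw [hrdef, ENNReal.ofReal_pow (Real.exp_pos _).le]
          _ = ENNReal.ofReal (Real.exp (-(m:ℝ))) := by
              rw [← Real.exp_nat_mul]
              norm_num
      show w ≤ ∏ i ∈ Finset.range k, z i ω
      rw [hprodeq, hwdef]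
      apply ENNReal.ofReal_le_ofReal
      apply Real.exp_le_exp.mpr
      have h8 : (m:ℝ) ≤ t/ε := by
        rw [le_div_iff₀ hεpos]
        linarith [hεm]
      linarith
    have hmarkov := mul_meas_ge_le_lintegral₀ (μ := P) (hprodmeas k).aemeasurable w
    have hw0 : w ≠ 0 := by
      rw [hwdef]
      simp [ENNReal.ofReal_eq_zero, not_le, Real.exp_pos]
    have hwtop : w ≠ ⊤ := ENNReal.ofReal_ne_top
    have hwinv : w⁻¹ = ENNReal.ofReal (Real.exp (t/ε)) := by
      rw [hwdef, Real.exp_neg, ENNReal.ofReal_inv_of_pos (Real.exp_pos _), inv_inv]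
    calc P {ω | (k:ℝ≥0∞) ≤ G t ω}
        ≤ P {ω | w ≤ ∏ i ∈ Finset.range k, z i ω} := measure_mono_ae hsub
      _ = w⁻¹ * (w * P {ω | w ≤ ∏ i ∈ Finset.range k, z i ω}) := by
          rw [← mul_assoc, ENNReal.inv_mul_cancel hw0 hwtop, one_mul]
      _ ≤ w⁻¹ * ∫⁻ ω, (∏ i ∈ Finset.range k, z i ω) ∂P := mul_le_mul_right hmarkov _
      _ ≤ w⁻¹ * ρ ^ k := mul_le_mul_right (hprod k) _
      _ = ENNReal.ofReal (Real.exp (t/ε)) * ρ ^ k := by rw [hwinv]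
  -- summable real series
  have h910 : ‖(9/10 : ℝ)‖ < 1 := by
    rw [Real.norm_eq_abs, abs_of_pos (by norm_num : (0:ℝ) < 9/10)]
    norm_num
  have hsummable : Summable (fun j : ℕ => ((j:ℝ) + 1) ^ 3 * (9/10 : ℝ) ^ j) := by
    have s3 := summable_pow_mul_geometric_of_norm_lt_one (R := ℝ) 3 h910
    have s2 := (summable_pow_mul_geometric_of_norm_lt_one (R := ℝ) 2 h910).mul_left 3
    have s1 := (summable_pow_mul_geometric_of_norm_lt_one (R := ℝ) 1 h910).mul_left 3
    have s0 := summable_pow_mul_geometric_of_norm_lt_one (R := ℝ) 0 h910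
    refine ((s3.add s2).add (s1.add s0)).congr fun j => ?_
    push_cast
    ring
  set C₀ : ℝ := ∑' j : ℕ, ((j:ℝ) + 1) ^ 3 * (9/10 : ℝ) ^ j with hC₀def
  have hC₀nn : 0 ≤ C₀ := tsum_nonneg fun j => by positivity
  set a₀ : ℝ := Real.log (10/9) with ha₀def
  have ha₀pos : 0 < a₀ := Real.log_pos (by norm_num)
  set D : ℝ := 1/(ε*a₀) + 3 with hDdef
  have hDpos : 0 < D := by positivity
  set Cm : ℝ := (1 + 15*C₀) * D^4 with hCmdef
  have hCmnn : 0 ≤ Cm := by positivity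
  -- the cast coefficient bound
  have hcoef : ∀ m : ℕ, (((m+1)^4 - m^4 : ℕ) : ℝ) ≤ 15 * ((m:ℝ)+1)^3 := by
    intro m
    have h1 : ((m+1)^4 - m^4 : ℕ) = 4*m^3 + 6*m^2 + 4*m + 1 := by
      have h2 : m^4 ≤ (m+1)^4 := Nat.pow_le_pow_left (Nat.le_succ m) 4
      have h3 : (m+1)^4 = m^4 + (4*m^3 + 6*m^2 + 4*m + 1) := by ring
      omega
    rw [h1]
    push_cast
    nlinarith [sq_nonneg ((m:ℝ)), sq_nonneg ((m:ℝ)+1), Nat.cast_nonneg (α := ℝ) m]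
  -- the fourth moment bound
  have hmoment : ∀ t : ℝ, 1 ≤ t → ∫⁻ ω, (G t ω) ^ 4 ∂P ≤ ENNReal.ofReal (Cm * t^4) := by
    intro t ht
    set K : ℕ := Nat.ceil ((t/ε)/a₀) + 1 with hKdef
    have hKbig : Real.exp (t/ε) * (9/10:ℝ)^K ≤ 1 := by
      have h1 : (t/ε)/a₀ ≤ (K:ℝ) := by
        refine le_trans (Nat.le_ceil _) ?_
        rw [hKdef]
        push_cast
        linarith
      have h2 : t/ε ≤ (K:ℝ) * a₀ := by rwa [div_le_iff₀ ha₀pos] at h1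
      have h4 : (9/10:ℝ) = Real.exp (-a₀) := by
        rw [ha₀def, ← Real.log_inv, Real.exp_log (by norm_num)]
        norm_num
      have h3 : ((9:ℝ)/10)^K = Real.exp (-((K:ℝ) * a₀)) := by
        rw [h4, ← Real.exp_nat_mul]
        ring_nf
      rw [h3, ← Real.exp_add, Real.exp_le_one_iff]
      linarith
    have hsetmeas : ∀ k : ℕ, MeasurableSet {ω | (k:ℝ≥0∞) ≤ G t ω} := fun k =>
      measurableSet_le measurable_const (hGmeas t)
    have hitemeas : ∀ k : ℕ, Measurable (fun ω => if (k:ℝ≥0∞) ≤ G t ω then (1:ℝ≥0∞) else 0) :=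
      fun k => Measurable.ite (hsetmeas k) measurable_const measurable_const
    have step1 : ∫⁻ ω, (G t ω)^4 ∂P ≤
        ∑' k : ℕ, (((k+1)^4 - k^4 : ℕ) : ℝ≥0∞) * P {ω | (k:ℝ≥0∞) ≤ G t ω} := by
      calc ∫⁻ ω, (G t ω)^4 ∂P
          ≤ ∫⁻ ω, ∑' k:ℕ, (((k+1)^4 - k^4 : ℕ):ℝ≥0∞) *
              (if (k:ℝ≥0∞) ≤ G t ω then 1 else 0) ∂P :=
            lintegral_mono fun ω => pow4_le_tsum (G t ω)
        _ = ∑' k:ℕ, ∫⁻ ω, (((k+1)^4 - k^4:ℕ):ℝ≥0∞) *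
              (if (k:ℝ≥0∞) ≤ G t ω then 1 else 0) ∂P :=
            lintegral_tsum fun k => (measurable_const.mul (hitemeas k)).aemeasurable
        _ = ∑' k:ℕ, (((k+1)^4 - k^4:ℕ):ℝ≥0∞) * P {ω | (k:ℝ≥0∞) ≤ G t ω} := by
            refine tsum_congr fun k => ?_
            rw [lintegral_const_mul _ (hitemeas k)]
            congr 1
            rw [← lintegral_indicator_one (hsetmeas k)]
            refine lintegral_congr fun ω => ?_
            simp [Set.indicator_apply, Set.mem_setOf_eq]
    set v : ℕ → ℝ := fun k => if k < K then (((k+1)^4 - k^4 : ℕ) : ℝ)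
      else (((k+1)^4 - k^4 : ℕ) : ℝ) * (9/10:ℝ)^(k - K) with hvdef
    have hvnn : ∀ k, 0 ≤ v k := by
      intro k
      simp only [hvdef]
      by_cases h : k < K
      · simp only [if_pos h]; positivity
      · simp only [if_neg h]; positivity
    have hterm : ∀ k : ℕ, (((k+1)^4 - k^4 : ℕ):ℝ≥0∞) * P {ω | (k:ℝ≥0∞) ≤ G t ω}
        ≤ ENNReal.ofReal (v k) := by
      intro k
      by_cases hkK : k < K
      · calc (((k+1)^4 - k^4:ℕ):ℝ≥0∞) * P {ω | (k:ℝ≥0∞) ≤ G t ω}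
            ≤ (((k+1)^4 - k^4:ℕ):ℝ≥0∞) * 1 := mul_le_mul_right prob_le_one _
          _ = ENNReal.ofReal (v k) := by
              rw [mul_one]
              simp only [hvdef, if_pos hkK]
              rw [ENNReal.ofReal_natCast]
      · push_neg at hkK
        have hk1 : 1 ≤ k := le_trans (by omega) hkK
        have h1 := htail t k hk1
        calc (((k+1)^4-k^4:ℕ):ℝ≥0∞) * P {ω | (k:ℝ≥0∞) ≤ G t ω}
            ≤ (((k+1)^4-k^4:ℕ):ℝ≥0∞) * (ENNReal.ofReal (Real.exp (t/ε)) * ρ^k) :=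
              mul_le_mul_right h1 _
          _ = ENNReal.ofReal ((((k+1)^4-k^4:ℕ):ℝ) * (Real.exp (t/ε) * (9/10)^k)) := by
              rw [hρdef, ← ENNReal.ofReal_pow (by norm_num),
                ← ENNReal.ofReal_mul (Real.exp_pos _).le, ← ENNReal.ofReal_natCast,
                ← ENNReal.ofReal_mul (Nat.cast_nonneg _)]
          _ ≤ ENNReal.ofReal (v k) := by
              apply ENNReal.ofReal_le_ofReal
              simp only [hvdef, if_neg (not_lt.mpr hkK)]
              have h2 : (9/10:ℝ)^k = (9/10:ℝ)^K * (9/10:ℝ)^(k-K) := by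
                rw [← pow_add]
                congr 1
                omega
              have h3 : Real.exp (t/ε) * (9/10:ℝ)^k ≤ (9/10:ℝ)^(k-K) := by
                rw [h2, ← mul_assoc]
                calc Real.exp (t/ε) * (9/10:ℝ)^K * (9/10:ℝ)^(k-K)
                    ≤ 1 * (9/10:ℝ)^(k-K) :=
                      mul_le_mul_of_nonneg_right hKbig (by positivity)
                  _ = (9/10:ℝ)^(k-K) := one_mul _
              exact mul_le_mul_of_nonneg_left h3 (Nat.cast_nonneg _)
    have hshift : ∀ j : ℕ, v (j + K) = (((j+K+1)^4 - (j+K)^4 : ℕ) : ℝ) * (9/10:ℝ)^j := by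
      intro j
      simp only [hvdef, if_neg (by omega : ¬ (j + K < K))]
      congr 2
      omega
    have hvbound : ∀ j : ℕ, v (j + K) ≤ (15*((K:ℝ)+1)^3) * (((j:ℝ)+1)^3 * (9/10:ℝ)^j) := by
      intro j
      rw [hshift j]
      have h1 : (((j+K+1)^4 - (j+K)^4 : ℕ) : ℝ) ≤ 15 * (((j:ℝ)+(K:ℝ))+1)^3 := by
        have := hcoef (j+K)
        push_cast at this ⊢
        linarith
      have h2 : (((j:ℝ)+(K:ℝ))+1)^3 ≤ (((j:ℝ)+1)*((K:ℝ)+1))^3 := by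
        apply pow_le_pow_left₀ (by positivity)
        nlinarith [Nat.cast_nonneg (α := ℝ) j, Nat.cast_nonneg (α := ℝ) K]
      calc (((j+K+1)^4 - (j+K)^4 : ℕ) : ℝ) * (9/10:ℝ)^j
          ≤ (15 * (((j:ℝ)+1)*((K:ℝ)+1))^3) * (9/10:ℝ)^j := by
            apply mul_le_mul_of_nonneg_right _ (by positivity)
            calc (((j+K+1)^4 - (j+K)^4 : ℕ) : ℝ) ≤ 15 * (((j:ℝ)+(K:ℝ))+1)^3 := h1
              _ ≤ 15 * (((j:ℝ)+1)*((K:ℝ)+1))^3 := by linarith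
        _ = (15*((K:ℝ)+1)^3) * (((j:ℝ)+1)^3 * (9/10:ℝ)^j) := by ring
    have hvsum : Summable v := by
      rw [← summable_nat_add_iff K]
      apply Summable.of_nonneg_of_le (fun j => hvnn _) hvbound
      exact hsummable.mul_left _
    have hvtailsum : ∑' j : ℕ, v (j + K) ≤ (15*((K:ℝ)+1)^3) * C₀ := by
      calc ∑' j : ℕ, v (j + K)
          ≤ ∑' j : ℕ, (15*((K:ℝ)+1)^3) * (((j:ℝ)+1)^3 * (9/10:ℝ)^j) :=
            Summable.tsum_le_tsum hvbound ((summable_nat_add_iff K).mpr hvsum) (hsummable.mul_left _)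
        _ = (15*((K:ℝ)+1)^3) * C₀ := by rw [tsum_mul_left]
    have hb1 : ∑ k ∈ Finset.range K, v k = ((K:ℝ))^4 := by
      have h1 : ∀ k ∈ Finset.range K, v k = (((k+1)^4 - k^4 : ℕ):ℝ) := fun k hk =>
        by simp only [hvdef, if_pos (Finset.mem_range.mp hk)]
      rw [Finset.sum_congr rfl h1, ← Nat.cast_sum, tele_sum]
      push_cast
      ring
    have hKle : (K:ℝ) + 1 ≤ D * t := by
      have h1 : (K:ℝ) ≤ (t/ε)/a₀ + 2 := by
        rw [hKdef]
        push_cast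
        have h2 : ((Nat.ceil ((t/ε)/a₀) : ℕ) : ℝ) < (t/ε)/a₀ + 1 :=
          Nat.ceil_lt_add_one (by positivity)
        linarith
      have h3 : (t/ε)/a₀ = t * (1/(ε*a₀)) := by
        field_simp
      have h4 : (0:ℝ) < 1/(ε*a₀) := by positivity
      calc (K:ℝ) + 1 ≤ (t/ε)/a₀ + 3 := by linarith
        _ = t * (1/(ε*a₀)) + 3 := by rw [h3]
        _ ≤ t * (1/(ε*a₀)) + 3*t := by linarith
        _ = D * t := by rw [hDdef]; ring
    have hDt1 : (1:ℝ) ≤ D * t := by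
      have := hKle
      have h1 : (0:ℝ) ≤ (K:ℝ) := Nat.cast_nonneg _
      linarith
    have hvtotal : ∑' k, v k ≤ Cm * t^4 := by
      rw [← Summable.sum_add_tsum_nat_add K hvsum]
      have h1 : ((K:ℝ))^4 ≤ (D*t)^4 := by
        apply pow_le_pow_left₀ (Nat.cast_nonneg _)
        linarith
      have h2 : (15*((K:ℝ)+1)^3) * C₀ ≤ 15*(D*t)^3 * C₀ := by
        apply mul_le_mul_of_nonneg_right _ hC₀nn
        have h3 : ((K:ℝ)+1)^3 ≤ (D*t)^3 := by
          apply pow_le_pow_left₀ (by positivity)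
          exact hKle
        linarith
      have h4 : (D*t)^3 ≤ (D*t)^4 := by
        calc (D*t)^3 = (D*t)^3 * 1 := (mul_one _).symm
          _ ≤ (D*t)^3 * (D*t) := by
              apply mul_le_mul_of_nonneg_left hDt1 (by positivity)
          _ = (D*t)^4 := by ring
      calc (∑ k ∈ Finset.range K, v k) + ∑' j, v (j + K)
          ≤ (D*t)^4 + 15*(D*t)^3 * C₀ := by
            rw [hb1]
            have := le_trans hvtailsum h2
            linarith
        _ ≤ (D*t)^4 + 15*(D*t)^4 * C₀ := by nlinarith
        _ = (1 + 15*C₀) * (D*t)^4 := by ring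
        _ = Cm * t^4 := by rw [hCmdef]; ring
    calc ∫⁻ ω, (G t ω)^4 ∂P
        ≤ ∑' k : ℕ, (((k+1)^4 - k^4 : ℕ) : ℝ≥0∞) * P {ω | (k:ℝ≥0∞) ≤ G t ω} := step1
      _ ≤ ∑' k : ℕ, ENNReal.ofReal (v k) := ENNReal.tsum_le_tsum hterm
      _ = ENNReal.ofReal (∑' k, v k) := (ENNReal.ofReal_tsum_of_nonneg hvnn hvsum).symm
      _ ≤ ENNReal.ofReal (Cm * t^4) := ENNReal.ofReal_le_ofReal hvtotal
  -- integrability of g^4 and the moment bound in Bochner form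
  have hGlttop : ∀ᵐ ω ∂P, ∀ t : ℝ, G t ω < ⊤ := by
    filter_upwards [main_ae] with ω hω t
    obtain ⟨n, _, hGn, _⟩ := hω.1 t
    rw [hGn]
    exact ENNReal.natCast_lt_top n
  have hg4 : ∀ t : ℝ, 1 ≤ t →
      Integrable (fun ω => (g t ω)^4) P ∧ ∫ ω, (g t ω)^4 ∂P ≤ Cm * t^4 := by
    intro t ht
    have hGm4 : AEMeasurable (fun ω => (G t ω)^4) P := ((hGmeas t).pow_const 4).aemeasurable
    have hlt : ∫⁻ ω, (G t ω)^4 ∂P ≠ ⊤ :=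
      ne_top_of_le_ne_top ENNReal.ofReal_ne_top (hmoment t ht)
    have heq : (fun ω => (g t ω)^4) = fun ω => ((G t ω)^4).toReal := by
      funext ω
      simp only [hgdef, ENNReal.toReal_pow]
    constructor
    · rw [heq]
      exact integrable_toReal_of_lintegral_ne_top hGm4 hlt
    · rw [heq, integral_toReal hGm4 ?_]
      · calc (∫⁻ ω, (G t ω)^4 ∂P).toReal
            ≤ (ENNReal.ofReal (Cm * t^4)).toReal :=
              ENNReal.toReal_mono ENNReal.ofReal_ne_top (hmoment t ht)
          _ = Cm * t^4 := ENNReal.toReal_ofReal (by positivity)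
      · filter_upwards [hGlttop] with ω h
        exact ENNReal.pow_lt_top (h t)
  -- reduce to the measurable version g
  have hcongr : (fun t : ℝ => ∫ ω, ((N t ω : ℝ)/t - 1/μ)^2 ∂P)
      = fun t : ℝ => ∫ ω, (g t ω/t - 1/μ)^2 ∂P := by
    funext t
    apply integral_congr_ae
    filter_upwards [main_ae] with ω hω
    obtain ⟨n, hNg, _, _⟩ := hω.1 t
    rw [hNg]
  rw [hcongr]
  -- sequential criterion
  rw [tendsto_iff_seq_tendsto]
  intro u hu
  have huev : ∀ᶠ n in atTop, (1:ℝ) ≤ u n := hu.eventually (eventually_ge_atTop 1)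
  set f : ℕ → Ω → ℝ := fun n ω => if (1:ℝ) ≤ u n then (g (u n) ω/(u n) - 1/μ)^2 else 0
    with hfdef
  have hfmeas : ∀ n, Measurable (f n) := by
    intro n
    by_cases h : (1:ℝ) ≤ u n
    · simp only [hfdef, if_pos h]
      exact (((hgmeas (u n)).div_const (u n)).sub measurable_const).pow_const 2
    · simp only [hfdef, if_neg h]
      exact measurable_const
  have hfbound : ∀ n, (1:ℝ) ≤ u n → ∀ ω,
      (f n ω)^2 ≤ (8/(u n)^4) * (g (u n) ω)^4 + 8*(1/μ)^4 := by
    intro n h ω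
    have hupos : (0:ℝ) < u n := lt_of_lt_of_le one_pos h
    simp only [hfdef, if_pos h]
    set x : ℝ := g (u n) ω / u n with hxdef
    have hkey : ((x - 1/μ)^2)^2 ≤ 8*x^4 + 8*(1/μ)^4 := by
      nlinarith [sq_nonneg (x + 1/μ), sq_nonneg (x - 1/μ), sq_nonneg (x^2 - (1/μ)^2),
        sq_nonneg (x^2 + (1/μ)^2), sq_nonneg x, sq_nonneg (1/μ)]
    have hx4 : 8*x^4 = (8/(u n)^4) * (g (u n) ω)^4 := by
      rw [hxdef, div_pow]
      field_simp
    linarith [hkey, hx4.le]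
  have hdomint : ∀ n, (1:ℝ) ≤ u n →
      Integrable (fun ω => (8/(u n)^4) * (g (u n) ω)^4 + 8*(1/μ)^4) P :=
    fun n h => ((hg4 (u n) h).1.const_mul _).add (integrable_const _)
  have hfint2 : ∀ n, Integrable (fun ω => (f n ω)^2) P := by
    intro n
    by_cases h : (1:ℝ) ≤ u n
    · refine (hdomint n h).mono' ((hfmeas n).pow_const 2).aestronglyMeasurable ?_
      refine Eventually.of_forall fun ω => ?_
      rw [Real.norm_eq_abs, abs_of_nonneg (sq_nonneg _)]
      exact hfbound n h ω
    · have h1 : (fun ω => (f n ω)^2) = fun _ => (0:ℝ) := by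
        funext ω
        simp [hfdef, if_neg h]
      rw [h1]
      exact integrable_const 0
  have hfC : ∀ n, ∫ ω, (f n ω)^2 ∂P ≤ 8*Cm + 8*(1/μ)^4 := by
    intro n
    by_cases h : (1:ℝ) ≤ u n
    · have hupos : (0:ℝ) < u n := lt_of_lt_of_le one_pos h
      have h1 : ∫ ω, (f n ω)^2 ∂P
          ≤ ∫ ω, ((8/(u n)^4) * (g (u n) ω)^4 + 8*(1/μ)^4) ∂P :=
        integral_mono_ae (hfint2 n) (hdomint n h)
          (Eventually.of_forall fun ω => hfbound n h ω)
      have h2 : ∫ ω, ((8/(u n)^4) * (g (u n) ω)^4 + 8*(1/μ)^4) ∂P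
          = (8/(u n)^4) * (∫ ω, (g (u n) ω)^4 ∂P) + 8*(1/μ)^4 := by
        rw [integral_add (((hg4 (u n) h).1).const_mul _) (integrable_const _),
          integral_const_mul, integral_const]
        simp
      have h3 : (8/(u n)^4) * (∫ ω, (g (u n) ω)^4 ∂P) ≤ (8/(u n)^4) * (Cm * (u n)^4) := by
        apply mul_le_mul_of_nonneg_left (hg4 (u n) h).2 (by positivity)
      have h4 : (8/(u n)^4) * (Cm * (u n)^4) = 8*Cm := by
        field_simp
      linarith
    · have h1 : ∫ ω, (f n ω)^2 ∂P = 0 := by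
        have h2 : (fun ω => (f n ω)^2) = fun _ => (0:ℝ) := by
          funext ω
          simp [hfdef, if_neg h]
        rw [h2, integral_zero]
      rw [h1]
      positivity
  have hfae : ∀ᵐ ω ∂P, Tendsto (fun n => f n ω) atTop (𝓝 0) := by
    filter_upwards [main_ae] with ω hω
    have h1 : Tendsto (fun t : ℝ => (g t ω/t - 1/μ)^2) atTop (𝓝 0) := by
      have h2 : Tendsto (fun t : ℝ => g t ω/t - 1/μ) atTop (𝓝 (1/μ - 1/μ)) :=
        hω.2.sub_const (1/μ)
      rw [sub_self] at h2
      have h3 := h2.pow 2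
      simpa using h3
    have h4 := h1.comp hu
    refine h4.congr' ?_
    filter_upwards [huev] with n hn
    simp only [Function.comp, hfdef, if_pos hn]
  have happly : Tendsto (fun n => ∫ ω, f n ω ∂P) atTop (𝓝 0) := by
    apply vitali_aux P f (fun n => (hfmeas n).aestronglyMeasurable) ?_ hfint2
      (8*Cm + 8*(1/μ)^4) hfC hfae
    intro n
    refine Eventually.of_forall fun ω => ?_
    by_cases h : (1:ℝ) ≤ u n
    · simp only [hfdef, if_pos h]
      positivity
    · simp [hfdef, if_neg h]
  refine happly.congr' ?_
  filter_upwards [huev] with n hn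
  simp only [hfdef, if_pos hn, Function.comp]
end

section
/- Let 0 < β_L ≤ β_R. For x, η ≥ 0 set C(x,η) = ∫₀^∞ v e^{−η/v − x v²/2} dv and F(λ,η) = β_L β_R C(β_R+λ, η) C(β_L−λ, η). Then for every λ ∈ (−β_R, β_L−β_R) ∪ (0, β_L) there exists a unique η₀ > 0 such that F(λ, η₀) = 1. -/
open MeasureTheory

/-- `C(x,η) = ∫₀^∞ v e^{−η/v − x v²/2} dv`. -/
noncomputable def Ccal (x η : ℝ) : ℝ :=
  ∫ v in Set.Ioi (0 : ℝ), v * Real.exp (-η / v - x * v ^ 2 / 2)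

/-- `F(λ,η) = β_L β_R C(β_R+λ, η) C(β_L−λ, η)`. -/
noncomputable def Fcal (βL βR lam η : ℝ) : ℝ :=
  βL * βR * Ccal (βR + lam) η * Ccal (βL - lam) η

open Set Filter Real

namespace CcalAux

lemma meas (x η : ℝ) : Measurable (fun v : ℝ => v * Real.exp (-η / v - x * v ^ 2 / 2)) := by
  fun_prop

lemma bound_integrable {x : ℝ} (hx : 0 < x) :
    IntegrableOn (fun v : ℝ => v * Real.exp (-(x / 2) * v ^ 2)) (Ioi 0) :=
  (integrable_mul_exp_neg_mul_sq (by linarith : 0 < x / 2)).integrableOn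

lemma abs_le {x η : ℝ} (hη : 0 ≤ η) {v : ℝ} (hv : v ∈ Ioi (0:ℝ)) :
    ‖v * Real.exp (-η / v - x * v ^ 2 / 2)‖ ≤ v * Real.exp (-(x / 2) * v ^ 2) := by
  simp only [mem_Ioi] at hv
  rw [Real.norm_eq_abs, abs_mul, abs_of_pos hv, abs_of_pos (Real.exp_pos _)]
  have h1 : -η / v ≤ 0 := div_nonpos_of_nonpos_of_nonneg (by linarith) hv.le
  have h2 : -η / v - x * v ^ 2 / 2 ≤ -(x / 2) * v ^ 2 := by nlinarith
  exact mul_le_mul_of_nonneg_left (Real.exp_le_exp.2 h2) hv.le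

lemma integrableOn {x : ℝ} (hx : 0 < x) {η : ℝ} (hη : 0 ≤ η) :
    IntegrableOn (fun v : ℝ => v * Real.exp (-η / v - x * v ^ 2 / 2)) (Ioi 0) := by
  refine (bound_integrable hx).mono' (meas x η).aestronglyMeasurable ?_
  filter_upwards [ae_restrict_mem measurableSet_Ioi] with v hv
  exact abs_le hη hv

lemma pos {x : ℝ} (hx : 0 < x) {η : ℝ} (hη : 0 ≤ η) : 0 < Ccal x η := by
  rw [Ccal, setIntegral_pos_iff_support_of_nonneg_ae _ (integrableOn hx hη)]
  · have hsub : Ioi (0:ℝ) ⊆ Function.support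
        (fun v : ℝ => v * Real.exp (-η / v - x * v ^ 2 / 2)) ∩ Ioi 0 := by
      intro v hv
      refine ⟨?_, hv⟩
      simp only [Function.mem_support]
      have : (0:ℝ) < v := hv
      positivity
    calc (0:ENNReal) < volume (Ioi (0:ℝ)) := by simp
    _ ≤ _ := measure_mono hsub
  · filter_upwards [ae_restrict_mem measurableSet_Ioi] with v hv
    have : (0:ℝ) < v := hv
    positivity

lemma strictAnti {x : ℝ} (hx : 0 < x) : StrictAntiOn (fun η => Ccal x η) (Ici 0) := by
  intro η₁ hη₁ η₂ hη₂ hlt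
  simp only [mem_Ici] at hη₁ hη₂
  have h1 := integrableOn hx hη₁ (x := x)
  have h2 := integrableOn hx hη₂ (x := x)
  have key : 0 < Ccal x η₁ - Ccal x η₂ := by
    have hg : IntegrableOn (fun v : ℝ => v * Real.exp (-η₁ / v - x * v ^ 2 / 2)
        - v * Real.exp (-η₂ / v - x * v ^ 2 / 2)) (Ioi 0) := h1.sub h2
    rw [Ccal, Ccal, ← integral_sub h1 h2]
    rw [setIntegral_pos_iff_support_of_nonneg_ae _ hg]
    · have hsub : Ioi (0:ℝ) ⊆ Function.support
          (fun v : ℝ => v * Real.exp (-η₁ / v - x * v ^ 2 / 2)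
            - v * Real.exp (-η₂ / v - x * v ^ 2 / 2)) ∩ Ioi 0 := by
        intro v hv
        refine ⟨?_, hv⟩
        have hv' : (0:ℝ) < v := hv
        have harg : -η₂ / v < -η₁ / v := by
          rw [div_lt_div_iff₀ hv' hv']
          nlinarith
        have hexp : Real.exp (-η₂ / v - x * v ^ 2 / 2)
            < Real.exp (-η₁ / v - x * v ^ 2 / 2) :=
          Real.exp_lt_exp.2 (by linarith)
        have : 0 < v * Real.exp (-η₁ / v - x * v ^ 2 / 2)
            - v * Real.exp (-η₂ / v - x * v ^ 2 / 2) := by nlinarith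
        simp only [Function.mem_support]
        exact ne_of_gt this
      calc (0:ENNReal) < volume (Ioi (0:ℝ)) := by simp
      _ ≤ _ := measure_mono hsub
    · filter_upwards [ae_restrict_mem measurableSet_Ioi] with v hv
      have hv' : (0:ℝ) < v := hv
      have harg : -η₂ / v ≤ -η₁ / v := by
        rw [div_le_div_iff₀ hv' hv']
        nlinarith
      have hexp : Real.exp (-η₂ / v - x * v ^ 2 / 2)
          ≤ Real.exp (-η₁ / v - x * v ^ 2 / 2) :=
        Real.exp_le_exp.2 (by linarith)
      simp only [Pi.zero_apply]
      nlinarith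
  show Ccal x η₂ < Ccal x η₁
  linarith

lemma continuousOn {x : ℝ} (hx : 0 < x) : ContinuousOn (fun η => Ccal x η) (Ici 0) := by
  apply MeasureTheory.continuousOn_of_dominated
    (bound := fun v : ℝ => v * Real.exp (-(x / 2) * v ^ 2))
  · exact fun η _ => (meas x η).aestronglyMeasurable
  · intro η hη
    filter_upwards [ae_restrict_mem measurableSet_Ioi] with v hv
    exact abs_le hη hv
  · exact bound_integrable hx
  · filter_upwards [ae_restrict_mem measurableSet_Ioi] with v hv
    have hv' : (0:ℝ) < v := hv
    apply Continuous.continuousOn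
    have : Continuous (fun η : ℝ => -η / v - x * v ^ 2 / 2) := by fun_prop
    exact continuous_const.mul (Real.continuous_exp.comp this)

lemma tendsto_zero {x : ℝ} (hx : 0 < x) :
    Tendsto (fun η => Ccal x η) atTop (nhds 0) := by
  have : Tendsto (fun η => Ccal x η) atTop (nhds (∫ v in Ioi (0:ℝ), (0:ℝ))) := by
    apply MeasureTheory.tendsto_integral_filter_of_dominated_convergence
      (bound := fun v : ℝ => v * Real.exp (-(x / 2) * v ^ 2))
    · filter_upwards with η using (meas x η).aestronglyMeasurable
    · filter_upwards [eventually_ge_atTop (0:ℝ)] with η hη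
      filter_upwards [ae_restrict_mem measurableSet_Ioi] with v hv
      exact abs_le hη hv
    · exact bound_integrable hx
    · filter_upwards [ae_restrict_mem measurableSet_Ioi] with v hv
      have hv' : (0:ℝ) < v := hv
      have h0 : Tendsto (fun η : ℝ => η / v) atTop atTop :=
        tendsto_id.atTop_div_const hv'
      have h1 : Tendsto (fun η : ℝ => -η / v - x * v ^ 2 / 2) atTop atBot := by
        simp only [neg_div]
        exact tendsto_atBot_add_const_right _ _ (tendsto_neg_atBot_iff.2 h0)
      have h2 := Real.tendsto_exp_atBot.comp h1
      simpa using (tendsto_const_nhds (α := ℝ) (x := v)).mul h2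
  simpa using this

lemma at_zero {x : ℝ} (hx : 0 < x) : Ccal x 0 = 1 / x := by
  have hderiv : ∀ v : ℝ, HasDerivAt (fun v : ℝ => -(1 / x) * Real.exp (-(x / 2) * v ^ 2))
      (v * Real.exp (-(x / 2) * v ^ 2)) v := by
    intro v
    have h1 : HasDerivAt (fun v : ℝ => -(x / 2) * v ^ 2) (-(x / 2) * (2 * v)) v := by
      have := (hasDerivAt_pow 2 v).const_mul (-(x / 2))
      simpa using this
    have h2 := (h1.exp).const_mul (-(1 / x))
    refine h2.congr_deriv ?_
    have hx0 : x ≠ 0 := hx.ne'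
    field_simp
  have htend : Tendsto (fun v : ℝ => -(1 / x) * Real.exp (-(x / 2) * v ^ 2)) atTop (nhds 0) := by
    have h1 : Tendsto (fun v : ℝ => -(x / 2) * v ^ 2) atTop atBot := by
      have hp : Tendsto (fun v : ℝ => v ^ 2) atTop atTop := tendsto_pow_atTop (by norm_num)
      have : Tendsto (fun v : ℝ => -((x / 2) * v ^ 2)) atTop atBot :=
        tendsto_neg_atBot_iff.2 (hp.const_mul_atTop (by linarith))
      simpa [neg_mul] using this
    have := (Real.tendsto_exp_atBot.comp h1).const_mul (-(1 / x))
    simpa using this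
  have key := integral_Ioi_of_hasDerivAt_of_tendsto
    (f := fun v : ℝ => -(1 / x) * Real.exp (-(x / 2) * v ^ 2))
    (f' := fun v : ℝ => v * Real.exp (-(x / 2) * v ^ 2)) (a := 0)
    (Continuous.continuousWithinAt (by fun_prop)) (fun v _ => hderiv v)
    (bound_integrable hx) htend
  rw [Ccal]
  have heq : ∀ v ∈ Ioi (0:ℝ), v * Real.exp (-(0:ℝ) / v - x * v ^ 2 / 2)
      = v * Real.exp (-(x / 2) * v ^ 2) := by
    intro v _
    congr 1
    ring_nf
  rw [setIntegral_congr_fun measurableSet_Ioi heq, key]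
  simp

end CcalAux

/-- For every `λ ∈ (−β_R, β_L−β_R) ∪ (0, β_L)` there is a unique `η₀ > 0`
with `F(λ, η₀) = 1`. -/
theorem exists_unique_eta_Fcal_eq_one
    (βL βR : ℝ) (hβL : 0 < βL) (hLR : βL ≤ βR)
    (lam : ℝ)
    (hlam : lam ∈ Set.Ioo (-βR) (βL - βR) ∪ Set.Ioo 0 βL) :
    ∃! η : ℝ, 0 < η ∧ Fcal βL βR lam η = 1 := by
  have ha : 0 < βR + lam := by
    rcases hlam with ⟨h1, h2⟩ | ⟨h1, h2⟩ <;> linarith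
  have hb : 0 < βL - lam := by
    rcases hlam with ⟨h1, h2⟩ | ⟨h1, h2⟩ <;> linarith
  have hab : (βR + lam) * (βL - lam) < βL * βR := by
    rcases hlam with ⟨h1, h2⟩ | ⟨h1, h2⟩ <;> nlinarith
  set a := βR + lam with ha_def
  set b := βL - lam with hb_def
  have hβR : 0 < βR := lt_of_lt_of_le hβL hLR
  have hanti : StrictAntiOn (fun η => Fcal βL βR lam η) (Ici 0) := by
    intro η₁ hη₁ η₂ hη₂ hlt
    have c1 := CcalAux.strictAnti ha hη₁ hη₂ hlt
    have c2 := CcalAux.strictAnti hb hη₁ hη₂ hlt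
    have p1 := CcalAux.pos ha (mem_Ici.1 hη₂)
    have p2 := CcalAux.pos hb (mem_Ici.1 hη₁)
    have p3 := CcalAux.pos ha (mem_Ici.1 hη₁)
    have p4 := CcalAux.pos hb (mem_Ici.1 hη₂)
    have hBB : (0:ℝ) < βL * βR := by positivity
    have hprod : Ccal a η₂ * Ccal b η₂ < Ccal a η₁ * Ccal b η₁ := by nlinarith
    show Fcal βL βR lam η₂ < Fcal βL βR lam η₁
    simp only [Fcal, ← ha_def, ← hb_def]
    calc βL * βR * Ccal a η₂ * Ccal b η₂ = βL * βR * (Ccal a η₂ * Ccal b η₂) := by ring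
    _ < βL * βR * (Ccal a η₁ * Ccal b η₁) := by exact mul_lt_mul_of_pos_left hprod hBB
    _ = βL * βR * Ccal a η₁ * Ccal b η₁ := by ring
  have hcont : ContinuousOn (fun η => Fcal βL βR lam η) (Ici 0) := by
    simp only [Fcal, ← ha_def, ← hb_def]
    exact (continuousOn_const.mul (CcalAux.continuousOn ha)).mul (CcalAux.continuousOn hb)
  have hF0 : 1 < Fcal βL βR lam 0 := by
    simp only [Fcal, ← ha_def, ← hb_def, CcalAux.at_zero ha, CcalAux.at_zero hb]
    rw [show βL * βR * (1 / a) * (1 / b) = βL * βR / (a * b) by field_simp]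
    rw [lt_div_iff₀ (by positivity)]
    linarith
  have hFtop : Tendsto (fun η => Fcal βL βR lam η) atTop (nhds 0) := by
    have := ((CcalAux.tendsto_zero ha).const_mul (βL * βR)).mul (CcalAux.tendsto_zero hb)
    simp only [mul_zero, zero_mul] at this
    simpa [Fcal, ← ha_def, ← hb_def, mul_assoc] using this
  have hev : ∀ᶠ η in atTop, Fcal βL βR lam η < 1 :=
    hFtop.eventually_lt_const one_pos
  obtain ⟨η₂, hF2, hη₂pos⟩ := (hev.and (eventually_gt_atTop 0)).exists
  have hcw : ContinuousWithinAt (fun η => Fcal βL βR lam η) (Ici 0) 0 :=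
    hcont 0 (mem_Ici.2 le_rfl)
  have hev1 : ∀ᶠ η in nhdsWithin 0 (Ici 0), 1 < Fcal βL βR lam η :=
    hcw.eventually_const_lt hF0
  have hle : nhdsWithin (0:ℝ) (Ioi 0) ≤ nhdsWithin 0 (Ici 0) :=
    nhdsWithin_mono 0 Ioi_subset_Ici_self
  have hne : (nhdsWithin (0:ℝ) (Ioi 0)).NeBot := nhdsGT_neBot 0
  obtain ⟨η₁, hF1, hη₁mem⟩ := ((hev1.filter_mono hle).and self_mem_nhdsWithin).exists
  have hη₁pos : (0:ℝ) < η₁ := hη₁mem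
  have hlt : η₁ < η₂ := by
    by_contra h
    push_neg at h
    rcases eq_or_lt_of_le h with heq | h
    · rw [heq] at hF2; linarith
    · have h2 : Fcal βL βR lam η₁ < Fcal βL βR lam η₂ :=
        hanti (mem_Ici.2 hη₂pos.le) (mem_Ici.2 hη₁pos.le) h
      linarith
  have hsub : Icc η₁ η₂ ⊆ Ici 0 := fun y hy => le_trans hη₁pos.le hy.1
  have hivt := intermediate_value_Icc' hlt.le (hcont.mono hsub)
  have h1mem : (1:ℝ) ∈ Icc (Fcal βL βR lam η₂) (Fcal βL βR lam η₁) := ⟨hF2.le, hF1.le⟩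
  obtain ⟨η₀, hη₀mem, hη₀'⟩ := hivt h1mem
  have hη₀ : Fcal βL βR lam η₀ = 1 := hη₀'
  refine ⟨η₀, ⟨lt_of_lt_of_le hη₁pos hη₀mem.1, hη₀⟩, ?_⟩
  rintro η ⟨hηpos, hηeq⟩
  have hη₀pos : 0 < η₀ := lt_of_lt_of_le hη₁pos hη₀mem.1
  by_contra hneq
  rcases lt_or_gt_of_ne hneq with h | h
  · have h2 : Fcal βL βR lam η₀ < Fcal βL βR lam η :=
      hanti (mem_Ici.2 hηpos.le) (mem_Ici.2 hη₀pos.le) h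
    rw [hη₀, hηeq] at h2
    exact lt_irrefl _ h2
  · have h2 : Fcal βL βR lam η < Fcal βL βR lam η₀ :=
      hanti (mem_Ici.2 hη₀pos.le) (mem_Ici.2 hηpos.le) h
    rw [hη₀, hηeq] at h2
    exact lt_irrefl _ h2
end

section
/- Let 0 < β_L ≤ β_R, T_L = 1/β_L, T_R = 1/β_R, and κ = (√(πβ_L/2) + √(πβ_R/2))^{−1}. For λ ∈ (0, β_L), let f(λ) be the unique η > 0 with F(λ, η) = 1. Then f is differentiable on (0, β_L) and lim_{λ↓0} f'(λ) = κ (T_L − T_R). -/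
open MeasureTheory Filter
open Set Topology Asymptotics

noncomputable def Ik (k : ℕ) (x η : ℝ) : ℝ :=
  ∫ v in Set.Ioi (0 : ℝ), v ^ k * Real.exp (-η / v - x * v ^ 2 / 2)


lemma meas_exp_aux (x η : ℝ) : Measurable fun v : ℝ => Real.exp (-η / v - x * v ^ 2 / 2) := by
  apply Real.measurable_exp.comp
  exact (measurable_const.div measurable_id).sub
    (((measurable_id.pow_const 2).const_mul x).div_const 2)

lemma meas_ik_aux (k : ℕ) (x η : ℝ) :
    Measurable fun v : ℝ => v ^ k * Real.exp (-η / v - x * v ^ 2 / 2) :=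
  (measurable_id.pow_const k).mul (meas_exp_aux x η)

lemma exp_term_le {v x η c : ℝ} (hv : 0 < v) (hc : c ≤ x) (hη : 0 ≤ η) :
    Real.exp (-η / v - x * v ^ 2 / 2) ≤ Real.exp (-(c / 2) * v ^ 2) := by
  apply Real.exp_le_exp.2
  have h1 : 0 ≤ η / v := div_nonneg hη hv.le
  have h2 : 0 ≤ (x - c) * v ^ 2 := mul_nonneg (by linarith) (sq_nonneg v)
  have : -η / v = -(η / v) := by ring
  rw [this]; nlinarith

lemma integrableOn_pow_gauss {k : ℕ} {b : ℝ} (hb : 0 < b) :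
    IntegrableOn (fun v : ℝ => v ^ k * Real.exp (-b * v ^ 2)) (Ioi 0) := by
  have h := integrableOn_rpow_mul_exp_neg_mul_sq hb (s := (k : ℝ))
    (by exact_mod_cast neg_one_lt_zero.trans_le (Nat.cast_nonneg k))
  refine h.congr_fun (fun v _ => ?_) measurableSet_Ioi
  simp only [Real.rpow_natCast]

lemma integrableOn_ik {k : ℕ} {x η : ℝ} (hx : 0 < x) (hη : 0 ≤ η) :
    IntegrableOn (fun v : ℝ => v ^ k * Real.exp (-η / v - x * v ^ 2 / 2)) (Ioi 0) := by
  refine Integrable.mono' (integrableOn_pow_gauss (k := k) (b := x / 2) (by positivity))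
    ((meas_ik_aux k x η).aestronglyMeasurable) ?_
  filter_upwards [ae_restrict_mem measurableSet_Ioi] with v hv
  have hv' : (0 : ℝ) < v := hv
  rw [Real.norm_eq_abs, abs_mul, abs_of_nonneg (by positivity : (0:ℝ) ≤ v ^ k),
    abs_of_nonneg (Real.exp_pos _).le]
  exact mul_le_mul_of_nonneg_left (exp_term_le hv' le_rfl hη) (by positivity)

lemma integrable_ik (k : ℕ) {x η : ℝ} (hx : 0 < x) (hη : 0 ≤ η) :
    Integrable (fun v : ℝ => v ^ k * Real.exp (-η / v - x * v ^ 2 / 2))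
      (volume.restrict (Ioi 0)) := integrableOn_ik hx hη

lemma sq_atTop {b : ℝ} (hb : 0 < b) : Tendsto (fun v : ℝ => b * v ^ 2) atTop atTop :=
  (tendsto_pow_atTop two_ne_zero).const_mul_atTop hb

lemma pow_gauss_tendsto_zero {b : ℝ} (hb : 0 < b) (n : ℕ) :
    Tendsto (fun v : ℝ => (b * v ^ 2) ^ n * Real.exp (-(b * v ^ 2))) atTop (𝓝 0) :=
  (Real.tendsto_pow_mul_exp_neg_atTop_nhds_zero n).comp (sq_atTop hb)

lemma gauss_tendsto_zero {b : ℝ} (hb : 0 < b) :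
    Tendsto (fun v : ℝ => Real.exp (-(b * v ^ 2))) atTop (𝓝 0) := by
  simpa using pow_gauss_tendsto_zero hb 0

lemma integral_gauss_Ioi {x : ℝ} (hx : 0 < x) :
    ∫ v in Ioi (0:ℝ), Real.exp (-(x/2) * v ^ 2) = Real.sqrt (Real.pi / (2 * x)) := by
  rw [integral_gaussian_Ioi]
  rw [show Real.pi / (x / 2) = 2 ^ 2 * (Real.pi / (2 * x)) by field_simp]
  rw [Real.sqrt_mul (by positivity), Real.sqrt_sq (by norm_num : (0:ℝ) ≤ 2)]
  ring

lemma integral_v_gauss_Ioi {x : ℝ} (hx : 0 < x) :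
    ∫ v in Ioi (0:ℝ), v * Real.exp (-(x/2) * v ^ 2) = 1 / x := by
  have hderiv : ∀ v ∈ Ici (0:ℝ),
      HasDerivAt (fun v : ℝ => -(1/x) * Real.exp (-(x/2) * v ^ 2))
        (v * Real.exp (-(x/2) * v ^ 2)) v := by
    intro v _
    have h1 : HasDerivAt (fun v : ℝ => -(x/2) * v ^ 2) (-(x/2) * (2 * v)) v := by
      simpa using (hasDerivAt_pow 2 v).const_mul (-(x/2))
    have := (h1.exp).const_mul (-(1/x))
    refine this.congr_deriv ?_
    field_simp
  have hint : IntegrableOn (fun v : ℝ => v * Real.exp (-(x/2) * v ^ 2)) (Ioi 0) := by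
    have := integrableOn_pow_gauss (k := 1) (b := x / 2) (by positivity)
    simpa using this
  have htend : Tendsto (fun v : ℝ => -(1/x) * Real.exp (-(x/2) * v ^ 2)) atTop (𝓝 0) := by
    rw [show (0:ℝ) = -(1/x) * 0 by ring]
    exact Tendsto.const_mul _ (by simpa [neg_mul] using gauss_tendsto_zero (b := x/2) (by positivity))
  have := integral_Ioi_of_hasDerivAt_of_tendsto' hderiv hint htend
  rw [this]; simp

lemma integral_v3_gauss_Ioi {x : ℝ} (hx : 0 < x) :
    ∫ v in Ioi (0:ℝ), v ^ 3 * Real.exp (-(x/2) * v ^ 2) = 2 / x ^ 2 := by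
  have hderiv : ∀ v ∈ Ici (0:ℝ),
      HasDerivAt (fun v : ℝ => -(v ^ 2 / x + 2 / x ^ 2) * Real.exp (-(x/2) * v ^ 2))
        (v ^ 3 * Real.exp (-(x/2) * v ^ 2)) v := by
    intro v _
    have h1 : HasDerivAt (fun v : ℝ => -(x/2) * v ^ 2) (-(x/2) * (2 * v)) v := by
      simpa using (hasDerivAt_pow 2 v).const_mul (-(x/2))
    have h2 : HasDerivAt (fun v : ℝ => -(v ^ 2 / x + 2 / x ^ 2)) (-(2 * v / x)) v := by
      have := ((hasDerivAt_pow 2 v).div_const x).add_const (2 / x ^ 2)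
      refine this.neg.congr_deriv ?_; simp
    have := h2.mul h1.exp
    refine this.congr_deriv ?_
    field_simp; ring
  have hint : IntegrableOn (fun v : ℝ => v ^ 3 * Real.exp (-(x/2) * v ^ 2)) (Ioi 0) :=
    integrableOn_pow_gauss (by positivity)
  have htend : Tendsto (fun v : ℝ => -(v ^ 2 / x + 2 / x ^ 2) * Real.exp (-(x/2) * v ^ 2))
      atTop (𝓝 0) := by
    have hb : (0:ℝ) < x / 2 := by positivity
    have t1 : Tendsto (fun v : ℝ => v ^ 2 * Real.exp (-(x/2 * v ^ 2))) atTop (𝓝 0) := by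
      have := (pow_gauss_tendsto_zero hb 1).const_mul (2 / x)
      simp only [pow_one, mul_zero] at this
      refine this.congr fun v => ?_
      field_simp
    have t2 := gauss_tendsto_zero hb
    have := ((t1.const_mul (-(1/x))).add (t2.const_mul (-(2/x^2))))
    simp only [mul_zero, add_zero] at this
    refine this.congr fun v => ?_
    simp only [neg_mul]
    field_simp; ring
  have := integral_Ioi_of_hasDerivAt_of_tendsto' hderiv hint htend
  rw [this]; simp [hx.ne']

lemma setIntegral_Ioi_pos {g : ℝ → ℝ} (hpos : ∀ v ∈ Ioi (0:ℝ), 0 < g v)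
    (hint : IntegrableOn g (Ioi 0)) : 0 < ∫ v in Ioi (0:ℝ), g v := by
  rw [setIntegral_pos_iff_support_of_nonneg_ae ?_ hint]
  · have hsub : Ioi (0:ℝ) ∩ Ioi 0 ⊆ Function.support g ∩ Ioi 0 :=
      inter_subset_inter_left _ (fun v hv => (hpos v hv).ne')
    calc (0:ENNReal) < volume (Ioi (0:ℝ) ∩ Ioi 0) := by simp [Real.volume_Ioi]
      _ ≤ _ := measure_mono hsub
  · filter_upwards [ae_restrict_mem measurableSet_Ioi] with v hv
    exact (hpos v hv).le

lemma ik_pos (k : ℕ) {x η : ℝ} (hx : 0 < x) (hη : 0 ≤ η) : 0 < Ik k x η := by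
  refine setIntegral_Ioi_pos (fun v hv => ?_) (integrableOn_ik hx hη)
  have : (0:ℝ) < v := hv
  positivity

lemma ik_anti (k : ℕ) {x η η' : ℝ} (hx : 0 < x) (hη : 0 ≤ η) (h : η ≤ η') :
    Ik k x η' ≤ Ik k x η := by
  refine setIntegral_mono_on (integrableOn_ik hx (hη.trans h)) (integrableOn_ik hx hη)
    measurableSet_Ioi (fun v hv => ?_)
  have hv : (0:ℝ) < v := hv
  have : -η' / v - x * v ^ 2 / 2 ≤ -η / v - x * v ^ 2 / 2 := by
    have h2 : η / v ≤ η' / v := (div_le_div_iff_of_pos_right hv).2 h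
    have e1 : -η / v = -(η / v) := by ring
    have e2 : -η' / v = -(η' / v) := by ring
    rw [e1, e2]; linarith
  exact mul_le_mul_of_nonneg_left (Real.exp_le_exp.2 this) (by positivity)

lemma ik_strict_anti (k : ℕ) {x η η' : ℝ} (hx : 0 < x) (hη : 0 ≤ η) (h : η < η') :
    Ik k x η' < Ik k x η := by
  have hsub : 0 < Ik k x η - Ik k x η' := by
    rw [Ik, Ik, ← integral_sub (integrableOn_ik hx hη) (integrableOn_ik hx (hη.trans h.le))]
    refine setIntegral_Ioi_pos (fun v hv => ?_) ?_
    · have hv : (0:ℝ) < v := hv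
      have hlt : -η' / v - x * v ^ 2 / 2 < -η / v - x * v ^ 2 / 2 := by
        have h2 : η / v < η' / v := (div_lt_div_iff_of_pos_right hv).2 h
        have e1 : -η / v = -(η / v) := by ring
        have e2 : -η' / v = -(η' / v) := by ring
        rw [e1, e2]; linarith
      have := Real.exp_lt_exp.2 hlt
      have hvk : (0:ℝ) < v ^ k := by positivity
      nlinarith
    · exact (integrableOn_ik hx hη).sub (integrableOn_ik hx (hη.trans h.le))
  linarith

lemma tendsto_ik {α : Type*} {l : Filter α} [l.IsCountablyGenerated] (k : ℕ) {x₀ : ℝ}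
    (hx : 0 < x₀) {u w : α → ℝ} (hu : Tendsto u l (𝓝 x₀)) (hw : Tendsto w l (𝓝 0))
    (hw0 : ∀ᶠ t in l, 0 ≤ w t) :
    Tendsto (fun t => Ik k (u t) (w t)) l (𝓝 (Ik k x₀ 0)) := by
  unfold Ik
  refine tendsto_integral_filter_of_dominated_convergence
    (fun v => v ^ k * Real.exp (-(x₀ / 4) * v ^ 2)) ?_ ?_ ?_ ?_
  · exact Eventually.of_forall fun t => (meas_ik_aux k (u t) (w t)).aestronglyMeasurable
  · have hu' : ∀ᶠ t in l, x₀ / 2 ≤ u t := hu.eventually (eventually_ge_nhds (by linarith : x₀ / 2 < x₀))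
    filter_upwards [hu', hw0] with t hut hwt
    filter_upwards [ae_restrict_mem measurableSet_Ioi] with v hv
    have hv : (0:ℝ) < v := hv
    rw [Real.norm_eq_abs, abs_mul, abs_of_nonneg (by positivity : (0:ℝ) ≤ v ^ k),
      abs_of_nonneg (Real.exp_pos _).le]
    have := exp_term_le hv hut hwt
    calc v ^ k * Real.exp (-w t / v - u t * v ^ 2 / 2)
        ≤ v ^ k * Real.exp (-(x₀ / 2 / 2) * v ^ 2) :=
          mul_le_mul_of_nonneg_left this (by positivity)
      _ = v ^ k * Real.exp (-(x₀ / 4) * v ^ 2) := by rw [show x₀ / 2 / 2 = x₀ / 4 by ring]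
  · exact integrableOn_pow_gauss (by positivity)
  · refine Eventually.of_forall fun v => ?_
    have harg : Tendsto (fun t => -w t / v - u t * v ^ 2 / 2) l
        (𝓝 (-(0:ℝ) / v - x₀ * v ^ 2 / 2)) := by
      exact ((hw.neg.div_const v).sub ((hu.mul_const _).div_const 2))
    exact (Real.continuous_exp.continuousAt.tendsto.comp harg).const_mul _

/-- the pointwise derivative CLM -/
noncomputable def Phi' (p : ℝ × ℝ) (v : ℝ) : (ℝ × ℝ) →L[ℝ] ℝ :=
  (-(v ^ 3 / 2) * Real.exp (-p.2 / v - p.1 * v ^ 2 / 2)) • ContinuousLinearMap.fst ℝ ℝ ℝ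
    + (-Real.exp (-p.2 / v - p.1 * v ^ 2 / 2)) • ContinuousLinearMap.snd ℝ ℝ ℝ

lemma hasFDerivAt_integrand {v : ℝ} (hv : 0 < v) (p : ℝ × ℝ) :
    HasFDerivAt (fun q : ℝ × ℝ => v * Real.exp (-q.2 / v - q.1 * v ^ 2 / 2)) (Phi' p v) p := by
  have ha : HasFDerivAt (fun q : ℝ × ℝ => (-(1/v)) * q.2)
      ((-(1/v)) • ContinuousLinearMap.snd ℝ ℝ ℝ) p := (hasFDerivAt_snd).const_mul _
  have hb : HasFDerivAt (fun q : ℝ × ℝ => (v^2/2) * q.1)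
      ((v^2/2) • ContinuousLinearMap.fst ℝ ℝ ℝ) p := (hasFDerivAt_fst).const_mul _
  have h1 : HasFDerivAt (fun q : ℝ × ℝ => -q.2 / v - q.1 * v ^ 2 / 2)
      ((-(v ^ 2 / 2)) • ContinuousLinearMap.fst ℝ ℝ ℝ
        + (-(1 / v)) • ContinuousLinearMap.snd ℝ ℝ ℝ) p := by
    have h : HasFDerivAt (fun q : ℝ × ℝ => (-(1/v)) * q.2 - (v^2/2) * q.1) _ p := ha.sub hb
    have hfun : (fun q : ℝ × ℝ => (-(1/v)) * q.2 - (v^2/2) * q.1)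
        = fun q : ℝ × ℝ => -q.2 / v - q.1 * v ^ 2 / 2 := funext fun q => by ring
    rw [hfun] at h
    refine h.congr_fderiv ?_
    refine ContinuousLinearMap.ext fun q => ?_
    simp only [ContinuousLinearMap.add_apply, ContinuousLinearMap.sub_apply,
      ContinuousLinearMap.smul_apply, ContinuousLinearMap.coe_fst',
      ContinuousLinearMap.coe_snd', smul_eq_mul]
    ring
  have h2 := ((Real.hasDerivAt_exp (-p.2 / v - p.1 * v ^ 2 / 2)).comp_hasFDerivAt p h1).const_mul v
  refine h2.congr_fderiv ?_
  refine ContinuousLinearMap.ext fun q => ?_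
  simp only [Phi', ContinuousLinearMap.add_apply, ContinuousLinearMap.smul_apply,
    ContinuousLinearMap.coe_fst', ContinuousLinearMap.coe_snd', smul_eq_mul]
  field_simp

lemma hasFDerivAt_Ccal {x₀ η₀ : ℝ} (hx : 0 < x₀) (hη : 0 < η₀) :
    HasFDerivAt (fun p : ℝ × ℝ => Ccal p.1 p.2)
      ((-(Ik 3 x₀ η₀ / 2)) • ContinuousLinearMap.fst ℝ ℝ ℝ
        + (-Ik 0 x₀ η₀) • ContinuousLinearMap.snd ℝ ℝ ℝ) (x₀, η₀) := by
  set ε : ℝ := min x₀ η₀ / 2 with hε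
  have hεpos : 0 < ε := by positivity
  set bnd : ℝ → ℝ := fun v => (v ^ 3 / 2 + 1) * Real.exp (-(x₀ / 4) * v ^ 2) with hbnd
  have hmeas' : AEStronglyMeasurable (Phi' (x₀, η₀)) (volume.restrict (Ioi 0)) := by
    unfold Phi'
    apply AEStronglyMeasurable.add
    · exact ((((measurable_id.pow_const 3).div_const 2).neg.mul
        (meas_exp_aux x₀ η₀)).aestronglyMeasurable).smul_const (ContinuousLinearMap.fst ℝ ℝ ℝ)
    · exact ((meas_exp_aux x₀ η₀).neg.aestronglyMeasurable).smul_const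
        (ContinuousLinearMap.snd ℝ ℝ ℝ)
  have hb_ae : ∀ᵐ v ∂(volume.restrict (Ioi (0:ℝ))),
      ∀ p ∈ Metric.ball ((x₀, η₀) : ℝ × ℝ) ε, ‖Phi' p v‖ ≤ bnd v := by
    filter_upwards [ae_restrict_mem measurableSet_Ioi] with v hv p hp
    have hv : (0:ℝ) < v := hv
    have hd1 : |x₀ - p.1| < ε := by
      calc |x₀ - p.1| = dist p.1 x₀ := by rw [Real.dist_eq, abs_sub_comm]
        _ ≤ dist p (x₀, η₀) := by rw [Prod.dist_eq]; exact le_max_left _ _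
        _ < ε := Metric.mem_ball.1 hp
    have hd2 : |η₀ - p.2| < ε := by
      calc |η₀ - p.2| = dist p.2 η₀ := by rw [Real.dist_eq, abs_sub_comm]
        _ ≤ dist p (x₀, η₀) := by rw [Prod.dist_eq]; exact le_max_right _ _
        _ < ε := Metric.mem_ball.1 hp
    have hp1 : x₀ / 2 ≤ p.1 := by
      have h := (abs_sub_lt_iff.1 hd1).1
      have := min_le_left x₀ η₀
      simp only [hε] at h ⊢
      linarith
    have hp2 : 0 ≤ p.2 := by
      have h := (abs_sub_lt_iff.1 hd2).1
      have := min_le_right x₀ η₀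
      simp only [hε] at h ⊢
      linarith
    have hE : Real.exp (-p.2 / v - p.1 * v ^ 2 / 2) ≤ Real.exp (-(x₀ / 4) * v ^ 2) := by
      have := exp_term_le hv hp1 hp2
      convert this using 3
      ring
    calc ‖Phi' p v‖ ≤ ‖(-(v ^ 3 / 2) * Real.exp (-p.2 / v - p.1 * v ^ 2 / 2)) •
            ContinuousLinearMap.fst ℝ ℝ ℝ‖
          + ‖(-Real.exp (-p.2 / v - p.1 * v ^ 2 / 2)) • ContinuousLinearMap.snd ℝ ℝ ℝ‖ :=
        norm_add_le _ _
      _ ≤ v ^ 3 / 2 * Real.exp (-p.2 / v - p.1 * v ^ 2 / 2) * 1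
          + Real.exp (-p.2 / v - p.1 * v ^ 2 / 2) * 1 := by
        gcongr
        · refine (norm_smul (β := (ℝ × ℝ) →L[ℝ] ℝ) _ _).le.trans ?_
          have h1 : ‖(-(v ^ 3 / 2) * Real.exp (-p.2 / v - p.1 * v ^ 2 / 2))‖
              = v ^ 3 / 2 * Real.exp (-p.2 / v - p.1 * v ^ 2 / 2) := by
            rw [Real.norm_eq_abs, abs_mul, abs_neg, abs_of_nonneg (by positivity : (0:ℝ) ≤ v^3/2),
              abs_of_nonneg (Real.exp_pos _).le]
          rw [h1]
          exact mul_le_mul_of_nonneg_left (ContinuousLinearMap.norm_fst_le ..) (by positivity)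
        · refine (norm_smul (β := (ℝ × ℝ) →L[ℝ] ℝ) _ _).le.trans ?_
          have h1 : ‖(-Real.exp (-p.2 / v - p.1 * v ^ 2 / 2))‖
              = Real.exp (-p.2 / v - p.1 * v ^ 2 / 2) := by
            rw [Real.norm_eq_abs, abs_neg, abs_of_nonneg (Real.exp_pos _).le]
          rw [h1]
          exact mul_le_mul_of_nonneg_left (ContinuousLinearMap.norm_snd_le ..) (Real.exp_pos _).le
      _ ≤ bnd v := by
        rw [hbnd]
        have h3 : (0:ℝ) ≤ v ^ 3 / 2 := by positivity
        nlinarith [Real.exp_pos (-(x₀ / 4) * v ^ 2), Real.exp_pos (-p.2 / v - p.1 * v ^ 2 / 2)]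
  have hbnd_int : Integrable bnd (volume.restrict (Ioi (0:ℝ))) := by
    have h1 : IntegrableOn (fun v : ℝ => v ^ 3 * Real.exp (-(x₀/4) * v ^ 2)) (Ioi 0) :=
      integrableOn_pow_gauss (by positivity)
    have h0 : IntegrableOn (fun v : ℝ => Real.exp (-(x₀/4) * v ^ 2)) (Ioi 0) :=
      (integrable_exp_neg_mul_sq (by positivity)).integrableOn
    refine Integrable.congr ((h1.const_mul (1/2 : ℝ)).add h0) (ae_of_all _ fun v => ?_)
    simp only [Pi.add_apply, hbnd]
    ring
  have key := hasFDerivAt_integral_of_dominated_of_fderiv_le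
    (F := fun (p : ℝ × ℝ) (v : ℝ) => v * Real.exp (-p.2 / v - p.1 * v ^ 2 / 2))
    (F' := Phi') (x₀ := ((x₀, η₀) : ℝ × ℝ)) (μ := volume.restrict (Ioi 0)) (bound := bnd)
    (Metric.ball_mem_nhds _ hεpos)
    (Eventually.of_forall fun p => (measurable_id.mul (meas_exp_aux p.1 p.2)).aestronglyMeasurable)
    (by have := integrableOn_ik (k := 1) hx hη.le; simp only [pow_one] at this; exact this)
    hmeas' hb_ae hbnd_int
    (by filter_upwards [ae_restrict_mem measurableSet_Ioi] with v hv p _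
        exact hasFDerivAt_integrand hv p)
  have hint : Integrable (Phi' (x₀, η₀)) (volume.restrict (Ioi 0)) := by
    refine Integrable.mono' hbnd_int hmeas' ?_
    filter_upwards [hb_ae] with v hv
    exact hv _ (Metric.mem_ball_self hεpos)
  have h1 : (∫ v in Ioi (0:ℝ), Phi' (x₀, η₀) v)
      = (-(Ik 3 x₀ η₀ / 2)) • ContinuousLinearMap.fst ℝ ℝ ℝ
        + (-Ik 0 x₀ η₀) • ContinuousLinearMap.snd ℝ ℝ ℝ := by
    refine ContinuousLinearMap.ext fun q => ?_
    rw [ContinuousLinearMap.integral_apply hint]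
    have e1 : (fun v : ℝ => (Phi' (x₀, η₀) v) q)
        = fun v : ℝ => (v ^ 3 * Real.exp (-η₀ / v - x₀ * v ^ 2 / 2)) * (-q.1 / 2)
          + (v ^ 0 * Real.exp (-η₀ / v - x₀ * v ^ 2 / 2)) * (-q.2) := by
      funext v
      simp only [Phi', ContinuousLinearMap.add_apply, ContinuousLinearMap.smul_apply,
        ContinuousLinearMap.coe_fst', ContinuousLinearMap.coe_snd', smul_eq_mul, pow_zero]
      ring
    rw [e1, integral_add ((integrableOn_ik hx hη.le).mul_const _)
      ((integrableOn_ik hx hη.le).mul_const _), integral_mul_const, integral_mul_const]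
    simp only [ContinuousLinearMap.add_apply, ContinuousLinearMap.smul_apply,
      ContinuousLinearMap.coe_fst', ContinuousLinearMap.coe_snd', smul_eq_mul, Ik]
    ring
  unfold Ccal
  exact h1 ▸ key

lemma implicit_hasDerivAt {G : ℝ × ℝ → ℝ} {L : (ℝ × ℝ) →L[ℝ] ℝ} {a b : ℝ}
    (hG : HasFDerivAt G L (a, b)) (hq : L (0, 1) ≠ 0)
    {f : ℝ → ℝ} (hfa : f a = b) (hfc : ContinuousAt f a)
    (hsol : ∀ᶠ x in 𝓝 a, G (x, f x) = G (a, b)) :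
    HasDerivAt f (-(L (1, 0)) / L (0, 1)) a := by
  have hL : ∀ u w : ℝ, L (u, w) = u * L (1, 0) + w * L (0, 1) := by
    intro u w
    have h : (u, w) = u • ((1:ℝ), (0:ℝ)) + w • ((0:ℝ), (1:ℝ)) := by
      simp [Prod.ext_iff]
    rw [h, map_add, L.map_smul, L.map_smul, smul_eq_mul, smul_eq_mul]
  have hφ : Tendsto (fun x => (x, f x)) (𝓝 a) (𝓝 (a, b)) := by
    have := (continuousAt_id.prodMk hfc)
    rw [ContinuousAt, hfa] at this
    exact this
  have o1 : (fun x => G (x, f x) - G (a, b) - L ((x, f x) - (a, b)))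
      =o[𝓝 a] fun x => (x, f x) - (a, b) := (hG.isLittleO).comp_tendsto hφ
  have o2 : (fun x => L ((x, f x) - (a, b))) =o[𝓝 a] fun x => (x, f x) - (a, b) := by
    have : (fun x => -L ((x, f x) - (a, b))) =o[𝓝 a] fun x => (x, f x) - (a, b) := by
      refine o1.congr' ?_ (Eventually.of_forall fun x => rfl)
      filter_upwards [hsol] with x hx
      rw [hx]; ring
    simpa using this.neg_left
  rw [hasDerivAt_iff_isLittleO, isLittleO_iff]
  intro c hc
  set p := L (1, 0) with hp
  set q := L (0, 1) with hqd
  have hq' : 0 < |q| := abs_pos.2 hq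
  have hden : 0 < 2 * (1 + |p / q|) := by positivity
  set ε := min (|q| / 2) (c * |q| / (2 * (1 + |p / q|))) with hεd
  have hεpos : 0 < ε := lt_min (by positivity) (by positivity)
  have hεq : ε ≤ |q| / 2 := min_le_left _ _
  have hεc : ε * (2 * (1 + |p / q|)) ≤ c * |q| := by
    have := min_le_right (|q| / 2) (c * |q| / (2 * (1 + |p / q|)))
    calc ε * (2 * (1 + |p / q|)) ≤ (c * |q| / (2 * (1 + |p / q|))) * (2 * (1 + |p / q|)) := by
          exact mul_le_mul_of_nonneg_right (hεd ▸ this) hden.le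
      _ = c * |q| := by field_simp
  filter_upwards [isLittleO_iff.1 o2 hεpos] with x hx
  set u := x - a with hu
  set w := f x - b with hw
  have hsub : (x, f x) - ((a, b) : ℝ × ℝ) = (u, w) := by simp [hu, hw, Prod.ext_iff]
  rw [hsub] at hx
  have hnorm : ‖((u, w) : ℝ × ℝ)‖ ≤ |u| + |w| := by
    rw [Prod.norm_def]
    simp only [Real.norm_eq_abs]
    exact max_le (le_add_of_nonneg_right (abs_nonneg _)) (le_add_of_nonneg_left (abs_nonneg _))
  have hx2 : |u * p + w * q| ≤ ε * (|u| + |w|) := by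
    have h1 : ‖L (u, w)‖ ≤ ε * ‖((u, w) : ℝ × ℝ)‖ := hx
    rw [hL u w, Real.norm_eq_abs] at h1
    exact h1.trans (mul_le_mul_of_nonneg_left hnorm hεpos.le)
  set r := w + p / q * u with hr
  have hqr : q * r = w * q + u * p := by rw [hr]; field_simp
  have hqrabs : |q| * |r| ≤ ε * (|u| + |w|) := by
    rw [← abs_mul, hqr]
    calc |w * q + u * p| = |u * p + w * q| := by ring_nf
      _ ≤ ε * (|u| + |w|) := hx2
  have hwle : |w| ≤ |r| + |p / q| * |u| := by
    have : w = r - p / q * u := by rw [hr]; ring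
    calc |w| = |r - p / q * u| := by rw [this]
      _ ≤ |r| + |p / q * u| := abs_sub _ _
      _ = |r| + |p / q| * |u| := by rw [abs_mul]
  have hgoal : |r| ≤ c * |u| := by
    nlinarith [abs_nonneg u, abs_nonneg w, abs_nonneg r, abs_nonneg (p / q),
      mul_le_mul_of_nonneg_left hwle hεpos.le]
  have : f x - f a - (x - a) • (-p / q) = r := by
    rw [hr, hfa, smul_eq_mul, ← hu, ← hw]; ring
  rw [this, Real.norm_eq_abs, Real.norm_eq_abs]
  exact hgoal

lemma ik_zero_integrand (x : ℝ) (k : ℕ) :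
    (fun v : ℝ => v ^ k * Real.exp (-(0:ℝ) / v - x * v ^ 2 / 2))
      = fun v : ℝ => v ^ k * Real.exp (-(x / 2) * v ^ 2) := by
  funext v
  rw [show -(0:ℝ) / v - x * v ^ 2 / 2 = -(x / 2) * v ^ 2 by rw [neg_zero, zero_div]; ring]

lemma Ccal_eq (x η : ℝ) : Ccal x η = Ik 1 x η := by
  unfold Ccal Ik
  simp [pow_one]

lemma Ik0_zero {x : ℝ} (hx : 0 < x) : Ik 0 x 0 = Real.sqrt (Real.pi / (2 * x)) := by
  rw [Ik, ik_zero_integrand]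
  simpa [pow_zero] using integral_gauss_Ioi hx

lemma Ik1_zero {x : ℝ} (hx : 0 < x) : Ik 1 x 0 = 1 / x := by
  rw [Ik, ik_zero_integrand]
  simpa [pow_one] using integral_v_gauss_Ioi hx

lemma Ik3_zero {x : ℝ} (hx : 0 < x) : Ik 3 x 0 = 2 / x ^ 2 := by
  rw [Ik, ik_zero_integrand]
  exact integral_v3_gauss_Ioi hx

lemma Ccal_zero {x : ℝ} (hx : 0 < x) : Ccal x 0 = 1 / x := by
  rw [Ccal_eq]; exact Ik1_zero hx

lemma Ccal_pos {x η : ℝ} (hx : 0 < x) (hη : 0 ≤ η) : 0 < Ccal x η := by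
  rw [Ccal_eq]; exact ik_pos 1 hx hη

lemma Ccal_anti {x η η' : ℝ} (hx : 0 < x) (hη : 0 ≤ η) (h : η ≤ η') : Ccal x η' ≤ Ccal x η := by
  rw [Ccal_eq, Ccal_eq]; exact ik_anti 1 hx hη h

lemma Ccal_strict_anti {x η η' : ℝ} (hx : 0 < x) (hη : 0 ≤ η) (h : η < η') :
    Ccal x η' < Ccal x η := by
  rw [Ccal_eq, Ccal_eq]; exact ik_strict_anti 1 hx hη h

set_option maxHeartbeats 1000000 in
lemma hasFDerivAt_F {βL βR lam η : ℝ} (h1 : 0 < βR + lam) (h2 : 0 < βL - lam) (hη : 0 < η) :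
    ∃ LL : (ℝ × ℝ) →L[ℝ] ℝ,
      HasFDerivAt (fun p : ℝ × ℝ => Fcal βL βR p.1 p.2) LL (lam, η) ∧
      LL (1, 0) = βL * βR * (Ccal (βR + lam) η * (Ik 3 (βL - lam) η / 2)
        - Ccal (βL - lam) η * (Ik 3 (βR + lam) η / 2)) ∧
      LL (0, 1) = -(βL * βR) * (Ccal (βL - lam) η * Ik 0 (βR + lam) η
        + Ccal (βR + lam) η * Ik 0 (βL - lam) η) := by
  have hC1 := hasFDerivAt_Ccal h1 hη
  have hC2 := hasFDerivAt_Ccal h2 hη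
  have hT1 : HasFDerivAt (fun p : ℝ × ℝ => ((βR + p.1, p.2) : ℝ × ℝ))
      (ContinuousLinearMap.id ℝ (ℝ × ℝ)) ((lam, η) : ℝ × ℝ) := by
    have h := (hasFDerivAt_id (𝕜 := ℝ) ((lam, η) : ℝ × ℝ)).const_add ((βR, 0) : ℝ × ℝ)
    refine h.congr_of_eventuallyEq (Eventually.of_forall fun p => ?_)
    simp [Prod.ext_iff]
  set N : (ℝ × ℝ) →L[ℝ] (ℝ × ℝ) :=
    (((-1 : ℝ) • ContinuousLinearMap.fst ℝ ℝ ℝ).prod (ContinuousLinearMap.snd ℝ ℝ ℝ)) with hN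
  have hT2 : HasFDerivAt (fun p : ℝ × ℝ => ((βL - p.1, p.2) : ℝ × ℝ)) N ((lam, η) : ℝ × ℝ) := by
    have h := (N.hasFDerivAt (x := ((lam, η) : ℝ × ℝ))).const_add ((βL, 0) : ℝ × ℝ)
    refine h.congr_of_eventuallyEq (Eventually.of_forall fun p => ?_)
    simp [hN, Prod.ext_iff, ContinuousLinearMap.prod_apply, sub_eq_add_neg]
  have hB1 := hC1.comp ((lam, η) : ℝ × ℝ) hT1
  have hB2 := hC2.comp ((lam, η) : ℝ × ℝ) hT2
  have hM := (hB1.const_mul (βL * βR)).mul hB2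
  have hM' : HasFDerivAt (fun p : ℝ × ℝ => Fcal βL βR p.1 p.2)
      ((βL * βR * Ccal (βR + lam) η) •
          (((-(Ik 3 (βL - lam) η / 2)) • ContinuousLinearMap.fst ℝ ℝ ℝ
            + (-Ik 0 (βL - lam) η) • ContinuousLinearMap.snd ℝ ℝ ℝ).comp N)
        + Ccal (βL - lam) η •
          ((βL * βR) • (((-(Ik 3 (βR + lam) η / 2)) • ContinuousLinearMap.fst ℝ ℝ ℝ
            + (-Ik 0 (βR + lam) η) • ContinuousLinearMap.snd ℝ ℝ ℝ).comp
              (ContinuousLinearMap.id ℝ (ℝ × ℝ))))) ((lam, η) : ℝ × ℝ) := hM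
  refine ⟨_, hM', ?_, ?_⟩ <;>
  · simp only [ContinuousLinearMap.add_apply, ContinuousLinearMap.smul_apply,
      ContinuousLinearMap.comp_apply, ContinuousLinearMap.coe_id', id_eq,
      ContinuousLinearMap.prod_apply, ContinuousLinearMap.coe_fst', ContinuousLinearMap.coe_snd',
      smul_eq_mul, hN]
    ring

/-- If for `λ ∈ (0, β_L)`, `f(λ)` is the (unique) `η > 0` with `F(λ,η) = 1`, then `f` is
differentiable on `(0, β_L)` and `f'(λ) → κ (T_L − T_R)` as `λ ↓ 0`, where
`κ = (√(πβ_L/2) + √(πβ_R/2))⁻¹`, `T_L = 1/β_L`, `T_R = 1/β_R`. -/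
theorem deriv_cgf_tendsto_conductivity
    (βL βR TL TR κ : ℝ) (hβL : 0 < βL) (hLR : βL ≤ βR)
    (hTL : TL = 1 / βL) (hTR : TR = 1 / βR)
    (hκ : κ = (Real.sqrt (Real.pi * βL / 2) + Real.sqrt (Real.pi * βR / 2))⁻¹)
    (f : ℝ → ℝ)
    (hf : ∀ lam ∈ Set.Ioo (0 : ℝ) βL, 0 < f lam ∧ Fcal βL βR lam (f lam) = 1) :
    (∀ lam ∈ Set.Ioo (0 : ℝ) βL, DifferentiableAt ℝ f lam) ∧
      Tendsto (deriv f) (nhdsWithin 0 (Set.Ioi 0)) (nhds (κ * (TL - TR))) := by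

  have hβR : 0 < βR := lt_of_lt_of_le hβL hLR
  have hanti : ∀ lam η η' : ℝ, 0 < βR + lam → 0 < βL - lam → 0 ≤ η → η ≤ η' →
      Fcal βL βR lam η' ≤ Fcal βL βR lam η := by
    intro lam η η' h1 h2 h0 hle
    have c1 := Ccal_anti h1 h0 hle
    have c2 := Ccal_anti h2 h0 hle
    have p1 := Ccal_pos h1 (h0.trans hle)
    have p2 := Ccal_pos h2 (h0.trans hle)
    have hb : 0 < βL * βR := mul_pos hβL hβR
    have m := mul_le_mul c1 c2 p2.le (p1.le.trans c1)
    unfold Fcal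
    calc βL * βR * Ccal (βR + lam) η' * Ccal (βL - lam) η'
        = βL * βR * (Ccal (βR + lam) η' * Ccal (βL - lam) η') := by ring
      _ ≤ βL * βR * (Ccal (βR + lam) η * Ccal (βL - lam) η) :=
          mul_le_mul_of_nonneg_left m hb.le
      _ = βL * βR * Ccal (βR + lam) η * Ccal (βL - lam) η := by ring
  have hstrict : ∀ lam η η' : ℝ, 0 < βR + lam → 0 < βL - lam → 0 ≤ η → η < η' →
      Fcal βL βR lam η' < Fcal βL βR lam η := by
    intro lam η η' h1 h2 h0 hlt
    have c1 := Ccal_strict_anti h1 h0 hlt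
    have c2 := Ccal_anti h2 h0 hlt.le
    have p1 := Ccal_pos h1 (h0.trans hlt.le)
    have p2 := Ccal_pos h2 (h0.trans hlt.le)
    have p1' := Ccal_pos h1 h0
    have hb : 0 < βL * βR := mul_pos hβL hβR
    have m := mul_lt_mul c1 c2 p2 p1'.le
    unfold Fcal
    calc βL * βR * Ccal (βR + lam) η' * Ccal (βL - lam) η'
        = βL * βR * (Ccal (βR + lam) η' * Ccal (βL - lam) η') := by ring
      _ < βL * βR * (Ccal (βR + lam) η * Ccal (βL - lam) η) :=
          (mul_lt_mul_iff_right₀ hb).2 m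
      _ = βL * βR * Ccal (βR + lam) η * Ccal (βL - lam) η := by ring
  have hcont : ∀ lam c : ℝ, 0 < βR + lam → 0 < βL - lam → 0 < c →
      ContinuousAt (fun t : ℝ => Fcal βL βR t c) lam := by
    intro lam c h1 h2 hc
    obtain ⟨LL, hLL, -, -⟩ := hasFDerivAt_F h1 h2 hc
    have hmk : ContinuousAt (fun t : ℝ => ((t, c) : ℝ × ℝ)) lam :=
      (continuous_id.prodMk continuous_const).continuousAt
    exact ContinuousAt.comp (g := fun p : ℝ × ℝ => Fcal βL βR p.1 p.2)
      (f := fun t : ℝ => ((t, c) : ℝ × ℝ)) (x := lam) hLL.continuousAt hmk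
  have hfcont : ∀ lam ∈ Ioo (0:ℝ) βL, ContinuousAt f lam := by
    intro lam hlam
    obtain ⟨hlam1, hlam2⟩ := hlam
    have h1 : 0 < βR + lam := by linarith
    have h2 : 0 < βL - lam := by linarith
    obtain ⟨hfpos, hfeq⟩ := hf lam ⟨hlam1, hlam2⟩
    rw [ContinuousAt, Metric.tendsto_nhds]
    intro ε hε
    set e := min (ε / 2) (f lam / 2) with he
    have hepos : 0 < e := lt_min (by linarith) (by linarith)
    have heε : e < ε := lt_of_le_of_lt (min_le_left _ _) (by linarith)
    have helow : 0 < f lam - e := by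
      have := min_le_right (ε / 2) (f lam / 2)
      simp only [he]
      linarith
    have hup : Fcal βL βR lam (f lam + e) < 1 := by
      rw [← hfeq]
      exact hstrict lam (f lam) (f lam + e) h1 h2 hfpos.le (by linarith)
    have hlow : 1 < Fcal βL βR lam (f lam - e) := by
      rw [← hfeq]
      exact hstrict lam (f lam - e) (f lam) h1 h2 helow.le (by linarith)
    have ev1 : ∀ᶠ t in 𝓝 lam, Fcal βL βR t (f lam + e) < 1 :=
      (hcont lam (f lam + e) h1 h2 (by linarith)).eventually (eventually_lt_nhds hup)
    have ev2 : ∀ᶠ t in 𝓝 lam, 1 < Fcal βL βR t (f lam - e) :=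
      (hcont lam (f lam - e) h1 h2 helow).eventually (eventually_gt_nhds hlow)
    have ev3 : Ioo (0:ℝ) βL ∈ 𝓝 lam :=
      isOpen_Ioo.mem_nhds ⟨hlam1, hlam2⟩
    filter_upwards [ev1, ev2, ev3] with t ht1 ht2 ht3
    obtain ⟨hft, hfteq⟩ := hf t ht3
    obtain ⟨ht0, htL⟩ := ht3
    have g1 : 0 < βR + t := by linarith
    have g2 : 0 < βL - t := by linarith
    have hub : f t < f lam + e := by
      by_contra hcon
      push_neg at hcon
      have := hanti t (f lam + e) (f t) g1 g2 (by linarith) hcon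
      rw [hfteq] at this
      linarith
    have hlb : f lam - e < f t := by
      by_contra hcon
      push_neg at hcon
      have := hanti t (f t) (f lam - e) g1 g2 hft.le hcon
      rw [hfteq] at this
      linarith
    rw [Real.dist_eq, abs_sub_lt_iff]
    constructor <;> linarith
  have hkey : ∀ lam ∈ Ioo (0:ℝ) βL, HasDerivAt f
      (-(βL * βR * (Ccal (βR + lam) (f lam) * (Ik 3 (βL - lam) (f lam) / 2)
          - Ccal (βL - lam) (f lam) * (Ik 3 (βR + lam) (f lam) / 2)))
        / (-(βL * βR) * (Ccal (βL - lam) (f lam) * Ik 0 (βR + lam) (f lam)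
          + Ccal (βR + lam) (f lam) * Ik 0 (βL - lam) (f lam)))) lam := by
    intro lam hlam
    obtain ⟨hlam1, hlam2⟩ := hlam
    have h1 : 0 < βR + lam := by linarith
    have h2 : 0 < βL - lam := by linarith
    obtain ⟨hfpos, hfeq⟩ := hf lam ⟨hlam1, hlam2⟩
    obtain ⟨LL, hLL, hP, hQ⟩ := hasFDerivAt_F h1 h2 hfpos
    have hq0 : LL (0, 1) ≠ 0 := by
      rw [hQ]
      have i1 := ik_pos 0 h1 hfpos.le
      have i2 := ik_pos 0 h2 hfpos.le
      have c1 := Ccal_pos h1 hfpos.le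
      have c2 := Ccal_pos h2 hfpos.le
      have hb : 0 < βL * βR := mul_pos hβL hβR
      refine ne_of_lt ?_
      nlinarith [mul_pos c2 i1, mul_pos c1 i2]
    have hsol : ∀ᶠ x in 𝓝 lam, Fcal βL βR x (f x) = Fcal βL βR lam (f lam) := by
      filter_upwards [isOpen_Ioo.mem_nhds (⟨hlam1, hlam2⟩ : lam ∈ Ioo (0:ℝ) βL)] with x hx
      rw [(hf x hx).2, hfeq]
    have hder := implicit_hasDerivAt hLL hq0 rfl (hfcont lam ⟨hlam1, hlam2⟩) hsol
    rw [hP, hQ] at hder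
    exact hder
  constructor
  · exact fun lam hlam => (hkey lam hlam).differentiableAt
  have hIooMem : Ioo (0:ℝ) βL ∈ 𝓝[>] (0:ℝ) := Ioo_mem_nhdsGT_of_mem ⟨le_refl 0, hβL⟩
  have hw0 : ∀ᶠ t in 𝓝[>] (0:ℝ), 0 ≤ f t := by
    filter_upwards [hIooMem] with t ht
    exact (hf t ht).1.le
  have hf0 : Tendsto f (𝓝[>] (0:ℝ)) (𝓝 0) := by
    rw [Metric.tendsto_nhds]
    intro ε hε
    have h1 : 0 < βR + 0 := by linarith
    have h2 : 0 < βL - 0 := by linarith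
    have h00 : Fcal βL βR 0 0 = 1 := by
      unfold Fcal
      rw [add_zero, sub_zero, Ccal_zero hβR, Ccal_zero hβL]
      field_simp
    have hup : Fcal βL βR 0 (ε / 2) < 1 := by
      rw [← h00]
      exact hstrict 0 0 (ε / 2) h1 h2 le_rfl (by linarith)
    have ev1 : ∀ᶠ t in 𝓝 (0:ℝ), Fcal βL βR t (ε / 2) < 1 :=
      (hcont 0 (ε / 2) h1 h2 (by linarith)).eventually (eventually_lt_nhds hup)
    filter_upwards [eventually_nhdsWithin_of_eventually_nhds ev1, hIooMem] with t ht1 ht2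
    obtain ⟨hft, hfteq⟩ := hf t ht2
    obtain ⟨ht0, htL⟩ := ht2
    have g1 : 0 < βR + t := by linarith
    have g2 : 0 < βL - t := by linarith
    have hub : f t < ε / 2 := by
      by_contra hcon
      push_neg at hcon
      have := hanti t (ε / 2) (f t) g1 g2 (by linarith) hcon
      rw [hfteq] at this
      linarith
    rw [Real.dist_eq, sub_zero, abs_of_pos hft]
    linarith
  have hu1 : Tendsto (fun t : ℝ => βR + t) (𝓝[>] (0:ℝ)) (𝓝 βR) := by
    have h : Tendsto (fun t : ℝ => βR + t) (𝓝 (0:ℝ)) (𝓝 (βR + 0)) :=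
      (continuous_const.add continuous_id).tendsto 0
    rw [add_zero] at h
    exact h.mono_left nhdsWithin_le_nhds
  have hu2 : Tendsto (fun t : ℝ => βL - t) (𝓝[>] (0:ℝ)) (𝓝 βL) := by
    have h : Tendsto (fun t : ℝ => βL - t) (𝓝 (0:ℝ)) (𝓝 (βL - 0)) :=
      (continuous_const.sub continuous_id).tendsto 0
    rw [sub_zero] at h
    exact h.mono_left nhdsWithin_le_nhds
  have A1 : Tendsto (fun t => Ik 1 (βR + t) (f t)) (𝓝[>] (0:ℝ)) (𝓝 (1 / βR)) := by
    have h := tendsto_ik 1 hβR hu1 hf0 hw0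
    rwa [Ik1_zero hβR] at h
  have A2 : Tendsto (fun t => Ik 1 (βL - t) (f t)) (𝓝[>] (0:ℝ)) (𝓝 (1 / βL)) := by
    have h := tendsto_ik 1 hβL hu2 hf0 hw0
    rwa [Ik1_zero hβL] at h
  have B1 : Tendsto (fun t => Ik 3 (βR + t) (f t)) (𝓝[>] (0:ℝ)) (𝓝 (2 / βR ^ 2)) := by
    have h := tendsto_ik 3 hβR hu1 hf0 hw0
    rwa [Ik3_zero hβR] at h
  have B2 : Tendsto (fun t => Ik 3 (βL - t) (f t)) (𝓝[>] (0:ℝ)) (𝓝 (2 / βL ^ 2)) := by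
    have h := tendsto_ik 3 hβL hu2 hf0 hw0
    rwa [Ik3_zero hβL] at h
  have D1 : Tendsto (fun t => Ik 0 (βR + t) (f t)) (𝓝[>] (0:ℝ))
      (𝓝 (Real.sqrt (Real.pi / (2 * βR)))) := by
    have h := tendsto_ik 0 hβR hu1 hf0 hw0
    rwa [Ik0_zero hβR] at h
  have D2 : Tendsto (fun t => Ik 0 (βL - t) (f t)) (𝓝[>] (0:ℝ))
      (𝓝 (Real.sqrt (Real.pi / (2 * βL)))) := by
    have h := tendsto_ik 0 hβL hu2 hf0 hw0
    rwa [Ik0_zero hβL] at h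
  set s : ℝ := Real.sqrt (Real.pi * βL / 2) + Real.sqrt (Real.pi * βR / 2) with hs
  have hspos : 0 < s :=
    add_pos (Real.sqrt_pos.2 (by positivity)) (Real.sqrt_pos.2 (by positivity))
  have hsqrtR : βR * Real.sqrt (Real.pi / (2 * βR)) = Real.sqrt (Real.pi * βR / 2) := by
    rw [show Real.pi * βR / 2 = βR ^ 2 * (Real.pi / (2 * βR)) by field_simp,
      Real.sqrt_mul (sq_nonneg βR), Real.sqrt_sq hβR.le]
  have hsqrtL : βL * Real.sqrt (Real.pi / (2 * βL)) = Real.sqrt (Real.pi * βL / 2) := by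
    rw [show Real.pi * βL / 2 = βL ^ 2 * (Real.pi / (2 * βL)) by field_simp,
      Real.sqrt_mul (sq_nonneg βL), Real.sqrt_sq hβL.le]
  have hnum : Tendsto (fun t => -(βL * βR * (Ccal (βR + t) (f t) * (Ik 3 (βL - t) (f t) / 2)
      - Ccal (βL - t) (f t) * (Ik 3 (βR + t) (f t) / 2)))) (𝓝[>] (0:ℝ))
      (𝓝 (-(βL * βR * (1 / βR * (2 / βL ^ 2 / 2) - 1 / βL * (2 / βR ^ 2 / 2))))) := by
    simp only [Ccal_eq]
    exact (((A1.mul (B2.div_const 2)).sub (A2.mul (B1.div_const 2))).const_mul (βL * βR)).neg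
  have hden : Tendsto (fun t => -(βL * βR) * (Ccal (βL - t) (f t) * Ik 0 (βR + t) (f t)
      + Ccal (βR + t) (f t) * Ik 0 (βL - t) (f t))) (𝓝[>] (0:ℝ))
      (𝓝 (-(βL * βR) * (1 / βL * Real.sqrt (Real.pi / (2 * βR))
        + 1 / βR * Real.sqrt (Real.pi / (2 * βL))))) := by
    simp only [Ccal_eq]
    exact ((A2.mul D1).add (A1.mul D2)).const_mul (-(βL * βR))
  have hQ0 : -(βL * βR) * (1 / βL * Real.sqrt (Real.pi / (2 * βR))
      + 1 / βR * Real.sqrt (Real.pi / (2 * βL))) = -s := by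
    rw [hs, ← hsqrtR, ← hsqrtL]
    field_simp
    ring
  have hQ0ne : -(βL * βR) * (1 / βL * Real.sqrt (Real.pi / (2 * βR))
      + 1 / βR * Real.sqrt (Real.pi / (2 * βL))) ≠ 0 := by
    rw [hQ0]
    exact neg_ne_zero.2 hspos.ne'
  have hdiv := hnum.div hden hQ0ne
  have hval : -(βL * βR * (1 / βR * (2 / βL ^ 2 / 2) - 1 / βL * (2 / βR ^ 2 / 2)))
      / (-(βL * βR) * (1 / βL * Real.sqrt (Real.pi / (2 * βR))
        + 1 / βR * Real.sqrt (Real.pi / (2 * βL)))) = κ * (TL - TR) := by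
    rw [hQ0, hκ, hTL, hTR]
    rw [div_neg, neg_div, neg_neg]
    rw [show βL * βR * (1 / βR * (2 / βL ^ 2 / 2) - 1 / βL * (2 / βR ^ 2 / 2))
      = 1 / βL - 1 / βR by field_simp]
    rw [div_eq_inv_mul]
  rw [hval] at hdiv
  refine hdiv.congr' ?_
  filter_upwards [hIooMem] with t ht
  exact ((hkey t ht).deriv).symm
end

section
/- Let 0 < β_L ≤ β_R, T_L = 1/β_L, T_R = 1/β_R, κ = (√(πβ_L/2)+√(πβ_R/2))^{−1} and j* = κ(T_L − T_R) ≥ 0. Define f : ℝ → [0, +∞] by: f(λ) is the unique η > 0 with F(λ,η) = 1 for λ ∈ (−β_R, β_L−β_R) ∪ (0, β_L); f(λ) = 0 for λ ∈ [β_L−β_R, 0]; f(λ) = +∞ for λ ∉ (−β_R, β_L); and let I(j) = sup_{λ∈ℝ} (λ j − f(λ)). Then I(j) = 0 for all j ∈ [0, j*], and I(j) = (β_R − β_L)|j| for all j ∈ [−j*, 0]. -/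
open MeasureTheory

/-- `f : ℝ → [0,∞]` is the cumulant generating function of the current:
`f(λ)` is the unique positive solution of `F(λ, f(λ)) = 1` on
`(−β_R, β_L) ∖ [β_L−β_R, 0]`, `f ≡ 0` on the interval between `β_L−β_R` and `0`,
and `f ≡ +∞` outside `(−β_R, β_L)`. -/
def IsCGF (βL βR : ℝ) (f : ℝ → EReal) : Prop :=
  (∀ lam ∈ Set.uIcc (βL - βR) 0, f lam = 0) ∧
  (∀ lam ∈ Set.Ioo (-βR) βL \ Set.uIcc (βL - βR) 0,
      ∃ η : ℝ, 0 < η ∧ Fcal βL βR lam η = 1 ∧ f lam = (η : EReal)) ∧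
  (∀ lam ∉ Set.Ioo (-βR) βL, f lam = ⊤)

/-- Legendre transform `I(j) = sup_λ (λ j − f(λ))`. -/
noncomputable def legendre (f : ℝ → EReal) (j : ℝ) : EReal :=
  ⨆ lam : ℝ, ((lam * j : ℝ) : EReal) - f lam

lemma integral_id_mul_gauss (b : ℝ) (hb : 0 < b) :
    ∫ v in Set.Ioi (0:ℝ), v * Real.exp (-b * v^2) = (2*b)⁻¹ := by
  have A : ∀ x : ℝ, HasDerivAt (fun y : ℝ => -(2*b)⁻¹ * Real.exp (-b * y^2))
      (x * Real.exp (-b * x^2)) x := by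
    intro x
    convert (((hasDerivAt_pow 2 x).const_mul (-b)).exp.const_mul (-(2*b)⁻¹)) using 1
    · rfl
    · rfl
    field_simp
    ring
  have htend : Filter.Tendsto (fun y : ℝ => -(2*b)⁻¹ * Real.exp (-b * y^2))
      Filter.atTop (nhds (-(2*b)⁻¹ * 0)) := by
    apply Filter.Tendsto.const_mul
    apply Real.tendsto_exp_atBot.comp
    exact (Filter.tendsto_pow_atTop two_ne_zero).const_mul_atTop_of_neg (neg_lt_zero.2 hb)
  have := MeasureTheory.integral_Ioi_of_hasDerivAt_of_tendsto
    (f := fun y : ℝ => -(2*b)⁻¹ * Real.exp (-b * y^2))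
    (f' := fun x : ℝ => x * Real.exp (-b * x^2)) (a := 0)
    (A 0).continuousAt.continuousWithinAt
    (fun x _ => A x) ((integrable_mul_exp_neg_mul_sq hb).integrableOn)
    htend
  rw [this]; simp

lemma Ccal_integrable (x η : ℝ) (hx : 0 < x) (hη : 0 ≤ η) :
    IntegrableOn (fun v : ℝ => v * Real.exp (-η / v - x * v ^ 2 / 2)) (Set.Ioi 0) := by
  have hb : 0 < x / 2 := by linarith
  apply Integrable.mono' ((integrable_mul_exp_neg_mul_sq hb).integrableOn)
  · apply ContinuousOn.aestronglyMeasurable _ measurableSet_Ioi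
    apply ContinuousOn.mul continuousOn_id
    apply Real.continuous_exp.comp_continuousOn
    apply ContinuousOn.sub
    · exact ContinuousOn.div continuousOn_const continuousOn_id fun v hv => ne_of_gt hv
    · fun_prop
  · filter_upwards [ae_restrict_mem measurableSet_Ioi] with v hv
    have hv : (0:ℝ) < v := hv
    rw [Real.norm_eq_abs, abs_of_nonneg (by positivity)]
    have h1 : Real.exp (-η / v - x * v ^ 2 / 2) ≤ Real.exp (-(x/2) * v^2) := by
      apply Real.exp_le_exp.2
      have h0 : 0 ≤ η / v := by positivity
      have e1 := neg_div v η
      have e2 : x*v^2/2 = (x/2)*v^2 := by ring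
      linarith
    nlinarith [Real.exp_pos (-(x/2)*v^2)]

lemma Ccal_ge (x η : ℝ) (hx : 0 < x) (hη : 0 ≤ η) :
    1/x - η * Real.sqrt (Real.pi / (2*x)) ≤ Ccal x η := by
  have hb : 0 < x / 2 := by linarith
  have hI1 : ∫ v in Set.Ioi (0:ℝ), v * Real.exp (-(x/2) * v^2) = 1/x := by
    rw [integral_id_mul_gauss _ hb]; field_simp
  have hI2 : ∫ v in Set.Ioi (0:ℝ), Real.exp (-(x/2) * v^2) = Real.sqrt (Real.pi/(2*x)) := by
    rw [integral_gaussian_Ioi]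
    rw [show Real.pi / (x/2) = 4 * (Real.pi / (2*x)) by field_simp; ring]
    rw [Real.sqrt_mul (by norm_num), show Real.sqrt 4 = 2 by
      rw [show (4:ℝ) = 2^2 by norm_num, Real.sqrt_sq (by norm_num)]]
    ring
  have hint1 : IntegrableOn (fun v : ℝ => v * Real.exp (-(x/2) * v^2)) (Set.Ioi 0) :=
    (integrable_mul_exp_neg_mul_sq hb).integrableOn
  have hint2 : IntegrableOn (fun v : ℝ => Real.exp (-(x/2) * v^2)) (Set.Ioi 0) :=
    (integrable_exp_neg_mul_sq hb).integrableOn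
  have key : ∫ v in Set.Ioi (0:ℝ), (v * Real.exp (-(x/2) * v^2) - η * Real.exp (-(x/2) * v^2))
      ≤ Ccal x η := by
    apply setIntegral_mono_on (hint1.sub (hint2.const_mul η)) (Ccal_integrable x η hx hη)
      measurableSet_Ioi
    intro v hv
    have hv : (0:ℝ) < v := hv
    have h1 : 1 - η / v ≤ Real.exp (-η / v) := by
      have h := Real.add_one_le_exp (-η / v)
      have e1 := neg_div v η
      linarith
    have h2 : v - η ≤ v * Real.exp (-η / v) := by
      have := mul_le_mul_of_nonneg_left h1 hv.le
      rw [mul_sub] at this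
      rw [mul_div_cancel₀] at this
      · linarith
      · exact hv.ne'
    calc v * Real.exp (-(x/2) * v^2) - η * Real.exp (-(x/2) * v^2)
        = (v - η) * Real.exp (-(x/2) * v^2) := by ring
      _ ≤ (v * Real.exp (-η / v)) * Real.exp (-(x/2) * v^2) := by
          apply mul_le_mul_of_nonneg_right h2 (Real.exp_pos _).le
      _ = v * Real.exp (-η / v - x * v ^ 2 / 2) := by
          rw [mul_assoc, ← Real.exp_add]; ring_nf
  rw [integral_sub hint1 (hint2.const_mul η), MeasureTheory.integral_const_mul, hI1, hI2] at key
  exact key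

lemma sqrt_piDiv (x : ℝ) (hx : 0 < x) :
    Real.sqrt (Real.pi / (2*x)) = Real.sqrt (Real.pi * x / 2) / x := by
  rw [show Real.pi / (2*x) = (Real.pi * x / 2) / x^2 by field_simp,
    Real.sqrt_div (by positivity), Real.sqrt_sq hx.le]

lemma sqrt_sum_le (βL βR lam : ℝ) (hβL : 0 < βL) (hLR : βL ≤ βR)
    (hlam : 0 < lam) (hlam2 : lam < βL) :
    Real.sqrt (Real.pi * (βR + lam) / 2) + Real.sqrt (Real.pi * (βL - lam) / 2)
      ≤ Real.sqrt (Real.pi * βL / 2) + Real.sqrt (Real.pi * βR / 2) := by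
  have hπ := Real.pi_pos
  set p := Real.sqrt (Real.pi * (βR + lam) / 2) with hpdef
  set q := Real.sqrt (Real.pi * βR / 2) with hqdef
  set r := Real.sqrt (Real.pi * βL / 2) with hrdef
  set t := Real.sqrt (Real.pi * (βL - lam) / 2) with htdef
  have hβR : 0 < βR := lt_of_lt_of_le hβL hLR
  have hp2 : p^2 = Real.pi * (βR + lam) / 2 := Real.sq_sqrt (by nlinarith)
  have hq2 : q^2 = Real.pi * βR / 2 := Real.sq_sqrt (by positivity)
  have hr2 : r^2 = Real.pi * βL / 2 := Real.sq_sqrt (by positivity)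
  have ht2 : t^2 = Real.pi * (βL - lam) / 2 := Real.sq_sqrt (by nlinarith)
  have hq0 : 0 < q := Real.sqrt_pos.2 (by positivity)
  have hr0 : 0 < r := Real.sqrt_pos.2 (by positivity)
  have hp0 : 0 ≤ p := Real.sqrt_nonneg _
  have ht0 : 0 ≤ t := Real.sqrt_nonneg _
  clear_value p q r t
  clear hpdef hqdef hrdef htdef
  have hqt : t ≤ q := by nlinarith
  have hrp : r ≤ p := by nlinarith
  have hpq : 0 < p + q := by linarith
  have e : (p - q) * (p + q) = (r - t) * (r + t) := by linear_combination hp2 - hq2 - hr2 + ht2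
  have htr : t ≤ r := by nlinarith
  have h1 : (r - t) * (r + t) ≤ (r - t) * (p + q) :=
    mul_le_mul_of_nonneg_left (by linarith) (by linarith)
  have h2 : (p - q) * (p + q) ≤ (r - t) * (p + q) := by linarith
  have h3 : p - q ≤ r - t := le_of_mul_le_mul_right (by linarith [h2]) hpq
  linarith

set_option maxHeartbeats 1000000 in
lemma key_lemma (βL βR lam η : ℝ) (hβL : 0 < βL) (hLR : βL ≤ βR)
    (hlam : 0 < lam) (hlam2 : lam < βL) (hη : 0 < η)
    (hF : Fcal βL βR lam η = 1) :
    lam * ((1/βL - 1/βR) *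
      (Real.sqrt (Real.pi * βL / 2) + Real.sqrt (Real.pi * βR / 2))⁻¹) ≤ η := by
  by_contra hcon
  push_neg at hcon
  have hπ := Real.pi_pos
  have hβR : 0 < βR := lt_of_lt_of_le hβL hLR
  have hx₁ : 0 < βR + lam := by linarith
  have hx₂ : 0 < βL - lam := by linarith
  have hsum := sqrt_sum_le βL βR lam hβL hLR hlam hlam2
  have hc₁' := Ccal_ge (βR + lam) η hx₁ hη.le
  have hc₂' := Ccal_ge (βL - lam) η hx₂ hη.le
  rw [sqrt_piDiv _ hx₁] at hc₁'
  rw [sqrt_piDiv _ hx₂] at hc₂'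
  rw [Fcal] at hF
  set x₁ := βR + lam with hx₁def
  set x₂ := βL - lam with hx₂def
  set s₁ := Real.sqrt (Real.pi * x₁ / 2) with hs₁def
  set s₂ := Real.sqrt (Real.pi * x₂ / 2) with hs₂def
  set sL := Real.sqrt (Real.pi * βL / 2) with hsLdef
  set sR := Real.sqrt (Real.pi * βR / 2) with hsRdef
  set C₁ := Ccal x₁ η with hC₁def
  set C₂ := Ccal x₂ η with hC₂def
  have hsL : 0 < sL := Real.sqrt_pos.2 (by positivity)
  have hsR : 0 < sR := Real.sqrt_pos.2 (by positivity)
  have hs₁0 : 0 ≤ s₁ := Real.sqrt_nonneg _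
  have hs₂0 : 0 ≤ s₂ := Real.sqrt_nonneg _
  clear_value s₁ s₂ sL sR C₁ C₂ x₁ x₂
  clear hC₁def hC₂def hs₁def hs₂def hsLdef hsRdef
  have hs : 0 < sL + sR := by linarith
  -- from hcon : η < lam * ((1/βL - 1/βR) * (sL + sR)⁻¹)
  have h1 : η * (sL + sR) < lam * (1/βL - 1/βR) := by
    have h := mul_lt_mul_of_pos_right hcon hs
    have e : lam * ((1/βL - 1/βR) * (sL + sR)⁻¹) * (sL + sR) = lam * (1/βL - 1/βR) := by
      field_simp
    rwa [e] at h
  have h3 : lam * (1/βL - 1/βR) = lam * (βR - βL) / (βL * βR) := by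
    field_simp [hβL.ne', hβR.ne']
  have h4 : η * (s₁ + s₂) < lam * (βR - βL) / (βL * βR) := by
    have h2 : η * (s₁ + s₂) ≤ η * (sL + sR) := mul_le_mul_of_nonneg_left hsum hη.le
    rw [h3] at h1
    linarith
  have h5 : η * (s₁ + s₂) * (βL * βR) < lam * (βR - βL) :=
    (lt_div_iff₀ (by positivity)).1 h4
  have hstep : βL * βR * (η * (s₁ + s₂)) < lam * (lam + βR - βL) := by
    linarith [h5, mul_pos hlam hlam]
  have hD : lam * (lam + βR - βL) < βL * βR := by
    nlinarith [mul_pos (show (0:ℝ) < βL - lam by linarith) (show (0:ℝ) < βR + lam by linarith)]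
  have hηs₁ : η * s₁ < 1 := by
    nlinarith [mul_nonneg (mul_pos hβL hβR).le (mul_nonneg hη.le hs₂0), mul_pos hβL hβR]
  have hηs₂ : η * s₂ < 1 := by
    nlinarith [mul_nonneg (mul_pos hβL hβR).le (mul_nonneg hη.le hs₁0), mul_pos hβL hβR]
  have hc₁ : (1 - η * s₁) / x₁ ≤ C₁ := by
    rw [sub_div, mul_div_assoc]
    exact hc₁'
  have hc₂ : (1 - η * s₂) / x₂ ≤ C₂ := by
    rw [sub_div, mul_div_assoc]
    exact hc₂'
  have hL₁0 : 0 ≤ (1 - η * s₁) / x₁ := div_nonneg (by linarith) hx₁.le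
  have hL₂0 : 0 ≤ (1 - η * s₂) / x₂ := div_nonneg (by linarith) hx₂.le
  have hxx : x₁ * x₂ = βL * βR - lam * (lam + βR - βL) := by
    rw [hx₁def, hx₂def]; ring
  have hmain : 1 < βL * βR * ((1 - η * s₁) / x₁) * ((1 - η * s₂) / x₂) := by
    rw [(show βL * βR * ((1 - η * s₁) / x₁) * ((1 - η * s₂) / x₂)
        = βL * βR * ((1 - η * s₁) * (1 - η * s₂)) / (x₁ * x₂) by ring),
      lt_div_iff₀ (mul_pos hx₁ hx₂)]
    have hss : 0 ≤ βL * βR * (η * s₁) * (η * s₂) :=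
      mul_nonneg (mul_nonneg (mul_pos hβL hβR).le (mul_nonneg hη.le hs₁0))
        (mul_nonneg hη.le hs₂0)
    have he : βL * βR * ((1 - η * s₁) * (1 - η * s₂))
        = βL * βR - βL * βR * (η * (s₁ + s₂)) + βL * βR * (η * s₁) * (η * s₂) := by ring
    linarith [hss, hstep, hxx, he]
  have hC₁0 : 0 ≤ C₁ := le_trans hL₁0 hc₁
  have hfinal : 1 < βL * βR * C₁ * C₂ := by
    calc 1 < βL * βR * ((1 - η * s₁) / x₁) * ((1 - η * s₂) / x₂) := hmain
      _ ≤ βL * βR * C₁ * ((1 - η * s₂) / x₂) :=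
          mul_le_mul_of_nonneg_right
            (mul_le_mul_of_nonneg_left hc₁ (mul_pos hβL hβR).le) hL₂0
      _ ≤ βL * βR * C₁ * C₂ :=
          mul_le_mul_of_nonneg_left hc₂
            (mul_nonneg (mul_pos hβL hβR).le hC₁0)
  exact lt_irrefl 1 (hF ▸ hfinal)

/-- The Legendre transform `I` of the cumulant generating function vanishes on `[0, j*]`
and equals `(β_R − β_L)|j|` on `[−j*, 0]`, where `j* = κ(T_L − T_R)`. -/
theorem legendre_cgf_flat_part
    (βL βR TL TR κ jstar : ℝ) (hβL : 0 < βL) (hLR : βL ≤ βR)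
    (hTL : TL = 1 / βL) (hTR : TR = 1 / βR)
    (hκ : κ = (Real.sqrt (Real.pi * βL / 2) + Real.sqrt (Real.pi * βR / 2))⁻¹)
    (hjstar : jstar = κ * (TL - TR))
    (f : ℝ → EReal) (hf : IsCGF βL βR f) :
    (∀ j ∈ Set.Icc (0 : ℝ) jstar, legendre f j = 0) ∧
      (∀ j ∈ Set.Icc (-jstar) (0 : ℝ),
        legendre f j = (((βR - βL) * |j| : ℝ) : EReal)) := by
  obtain ⟨hf0, hfpos, hftop⟩ := hf
  have hβR : 0 < βR := lt_of_lt_of_le hβL hLR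
  have hjs : jstar = (1/βL - 1/βR) *
      (Real.sqrt (Real.pi * βL / 2) + Real.sqrt (Real.pi * βR / 2))⁻¹ := by
    rw [hjstar, hκ, hTL, hTR]; ring
  have hjs0 : 0 ≤ jstar := by
    rw [hjs]
    apply mul_nonneg
    · have := one_div_le_one_div_of_le hβL hLR
      linarith
    · positivity
  have huIcc : Set.uIcc (βL - βR) 0 = Set.Icc (βL - βR) 0 := Set.uIcc_of_le (by linarith)
  have upper : ∀ lam η : ℝ, 0 < lam → lam < βL → 0 < η → Fcal βL βR lam η = 1 →
      lam * jstar ≤ η := by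
    intro lam η h1 h2 h3 h4
    rw [hjs]
    exact key_lemma βL βR lam η hβL hLR h1 h2 h3 h4
  have hsym : ∀ lam η : ℝ, Fcal βL βR (βL - βR - lam) η = Fcal βL βR lam η := by
    intro lam η
    unfold Fcal
    rw [show βR + (βL - βR - lam) = βL - lam by ring,
      show βL - (βL - βR - lam) = βR + lam by ring]
    ring
  constructor
  · intro j hj
    obtain ⟨hj0, hj1⟩ := hj
    apply le_antisymm
    · unfold legendre
      apply iSup_le
      intro lam
      by_cases h1 : lam ∈ Set.uIcc (βL - βR) 0
      · rw [hf0 lam h1]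
        rw [huIcc, Set.mem_Icc] at h1
        have : ((lam * j : ℝ) : EReal) - 0 = ((lam * j : ℝ) : EReal) := by simp
        rw [this]
        exact EReal.coe_nonpos.2 (mul_nonpos_iff.2 (Or.inr ⟨h1.2, hj0⟩))
      · by_cases h2 : lam ∈ Set.Ioo (-βR) βL
        · obtain ⟨η, hη, hFη, hfl⟩ := hfpos lam ⟨h2, h1⟩
          rw [hfl, ← EReal.coe_sub]
          apply EReal.coe_nonpos.2
          rw [huIcc, Set.mem_Icc, not_and_or, not_le, not_le] at h1
          rcases h1 with h1 | h1
          · have e1 : lam * j ≤ 0 := mul_nonpos_iff.2 (Or.inr ⟨by linarith, hj0⟩)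
            linarith
          · have hk := upper lam η h1 h2.2 hη hFη
            have e1 : lam * j ≤ lam * jstar := mul_le_mul_of_nonneg_left hj1 h1.le
            linarith
        · rw [hftop lam h2, EReal.sub_top]
          exact bot_le
    · have h00 : f 0 = 0 := hf0 0 Set.right_mem_uIcc
      have e : ((0 * j : ℝ) : EReal) - f 0 = 0 := by rw [h00]; norm_num
      calc (0:EReal) = ((0 * j : ℝ) : EReal) - f 0 := e.symm
        _ ≤ legendre f j := le_iSup (fun lam : ℝ => ((lam * j : ℝ) : EReal) - f lam) 0
  · intro j hj
    obtain ⟨hj0, hj1⟩ := hj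
    have habs : ((βR - βL) * |j| : ℝ) = ((βL - βR) * j : ℝ) := by
      rw [abs_of_nonpos hj1]; ring
    rw [show (((βR - βL) * |j| : ℝ) : EReal) = (((βL - βR) * j : ℝ) : EReal) by rw [habs]]
    apply le_antisymm
    · unfold legendre
      apply iSup_le
      intro lam
      by_cases h1 : lam ∈ Set.uIcc (βL - βR) 0
      · rw [hf0 lam h1]
        rw [huIcc, Set.mem_Icc] at h1
        have : ((lam * j : ℝ) : EReal) - 0 = ((lam * j : ℝ) : EReal) := by simp
        rw [this]
        exact EReal.coe_le_coe_iff.2 (mul_le_mul_of_nonpos_right h1.1 hj1)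
      · by_cases h2 : lam ∈ Set.Ioo (-βR) βL
        · obtain ⟨η, hη, hFη, hfl⟩ := hfpos lam ⟨h2, h1⟩
          rw [hfl, ← EReal.coe_sub]
          apply EReal.coe_le_coe_iff.2
          rw [huIcc, Set.mem_Icc, not_and_or, not_le, not_le] at h1
          rcases h1 with h1 | h1
          · have hF' : Fcal βL βR (βL - βR - lam) η = 1 := (hsym lam η).trans hFη
            have hk := upper (βL - βR - lam) η (by linarith) (by linarith [h2.1]) hη hF'
            have e1 : (lam - (βL - βR)) * j ≤ (lam - (βL - βR)) * (-jstar) :=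
              mul_le_mul_of_nonpos_left hj0 (by linarith)
            nlinarith [e1, hk]
          · have e1 : lam * j ≤ 0 := mul_nonpos_iff.2 (Or.inl ⟨h1.le, hj1⟩)
            have e2 : 0 ≤ (βL - βR) * j := by
              nlinarith [mul_nonneg (neg_nonneg.2 (show βL - βR ≤ 0 by linarith)) (neg_nonneg.2 hj1)]
            linarith
        · rw [hftop lam h2, EReal.sub_top]
          exact bot_le
    · have h00 : f (βL - βR) = 0 := hf0 (βL - βR) Set.left_mem_uIcc
      have e : (((βL - βR) * j : ℝ) : EReal) - f (βL - βR) = (((βL - βR) * j : ℝ) : EReal) := by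
        rw [h00]; simp
      calc (((βL - βR) * j : ℝ) : EReal)
          = (((βL - βR) * j : ℝ) : EReal) - f (βL - βR) := e.symm
        _ ≤ legendre f j := le_iSup (fun lam : ℝ => ((lam * j : ℝ) : EReal) - f lam) (βL - βR)
end

section
/- Let (μ_t)_{t>0} and (ν_t)_{t>0} be families of Borel probability measures on ℝ, let j ∈ ℝ and c ∈ [0, ∞). Assume that ν_t converges weakly to the Dirac measure δ_j as t → ∞ and that limsup_{t→∞} (1/t) H(ν_t | μ_t) ≤ c, where H denotes the relative entropy (Kullback–Leibler divergence). Then for every open set O ⊆ ℝ containing j, liminf_{t→∞} (1/t) log μ_t(O) ≥ −c. -/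
open MeasureTheory Filter
open scoped ENNReal Classical
open scoped Topology

/-- Relative entropy (Kullback–Leibler divergence) `H(ν|μ) ∈ [0,∞]`:
`∫ log(dν/dμ) dν` if `ν ≪ μ` (and the integrand is integrable), `+∞` otherwise. -/
noncomputable def relEnt (ν μ : Measure ℝ) : ℝ≥0∞ :=
  if ν ≪ μ ∧ Integrable (fun x => Real.log (ν.rnDeriv μ x).toReal) ν
  then ENNReal.ofReal (∫ x, Real.log (ν.rnDeriv μ x).toReal ∂ν)
  else ⊤

lemma mul_log_self_ge {x : ℝ} (h0 : 0 ≤ x) : -(Real.exp 1)⁻¹ ≤ x * Real.log x := by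
  rcases h0.eq_or_lt with h | h
  · rw [← h]; simp; positivity
  · have hx : (0:ℝ) < x⁻¹ / Real.exp 1 := by positivity
    have h1 := Real.log_le_sub_one_of_pos hx
    rw [Real.log_div (by positivity) (Real.exp_ne_zero 1), Real.log_exp, Real.log_inv] at h1
    have h2 : x * (-Real.log x - 1) ≤ x * (x⁻¹ / Real.exp 1 - 1) :=
      mul_le_mul_of_nonneg_left h1 h.le
    have h3 : x * (x⁻¹ / Real.exp 1) = (Real.exp 1)⁻¹ := by
      field_simp
    nlinarith

lemma setIntegral_log_rnDeriv_ge (ν μ : Measure ℝ) [IsProbabilityMeasure μ]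
    [IsProbabilityMeasure ν]
    (hac : ν ≪ μ) (hint : Integrable (fun x => Real.log (ν.rnDeriv μ x).toReal) ν)
    {A : Set ℝ} (hA : MeasurableSet A) :
    (ν A).toReal * Real.log ((ν A).toReal / (μ A).toReal)
      ≤ ∫ x in A, Real.log (ν.rnDeriv μ x).toReal ∂ν := by
  set f : ℝ → ℝ≥0∞ := ν.rnDeriv μ with hf
  have hfm : Measurable f := Measure.measurable_rnDeriv ν μ
  by_cases hν0 : ν A = 0
  · rw [hν0, Measure.restrict_eq_zero.mpr hν0]
    simp
  have hμ0 : μ A ≠ 0 := fun h => hν0 (hac h)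
  set a : ℝ := (ν A).toReal with haeq
  set b : ℝ := (μ A).toReal with hbeq
  have ha : 0 < a := ENNReal.toReal_pos hν0 (measure_ne_top _ _)
  have hb : 0 < b := ENNReal.toReal_pos hμ0 (measure_ne_top _ _)
  have hpos : ∀ᵐ x ∂ν, 0 < f x := Measure.rnDeriv_pos hac
  have hlt : ∀ᵐ x ∂ν, f x < ⊤ := hac.ae_le (Measure.rnDeriv_lt_top ν μ)
  set g : ℝ → ℝ≥0∞ := fun x => ENNReal.ofReal (a / b) * (f x)⁻¹ with hg
  have hgm : Measurable g := measurable_const.mul hfm.inv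
  -- lintegral bound
  have hinv : ∫⁻ x in A, (f x)⁻¹ ∂ν ≤ μ A := by
    have h1 : ∫⁻ x in A, (f x)⁻¹ ∂ν = ∫⁻ x in A, (f * fun x => (f x)⁻¹) x ∂μ := by
      conv_lhs => rw [← Measure.withDensity_rnDeriv_eq ν μ hac]
      exact setLIntegral_withDensity_eq_setLIntegral_mul μ hfm hfm.inv hA
    rw [h1]
    calc ∫⁻ x in A, (f * fun x => (f x)⁻¹) x ∂μ ≤ ∫⁻ _ in A, 1 ∂μ :=
          lintegral_mono fun x => ENNReal.mul_inv_le_one (f x)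
      _ = μ A := by simp
  have hgl : ∫⁻ x in A, g x ∂ν ≤ ENNReal.ofReal (a / b) * μ A := by
    show ∫⁻ x in A, ENNReal.ofReal (a / b) * (f x)⁻¹ ∂ν ≤ _
    rw [lintegral_const_mul (f := fun x => (f x)⁻¹) _ hfm.inv]
    exact mul_le_mul_right hinv _
  have htop : ∫⁻ x in A, g x ∂ν ≠ ⊤ :=
    (hgl.trans_lt (ENNReal.mul_lt_top ENNReal.ofReal_lt_top (measure_lt_top _ _))).ne
  have hgi : Integrable (fun x => (g x).toReal) (ν.restrict A) :=
    integrable_toReal_of_lintegral_ne_top hgm.aemeasurable htop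
  have hglt : ∀ᵐ x ∂ν, g x < ⊤ := by
    filter_upwards [hpos] with x hx
    exact ENNReal.mul_lt_top ENNReal.ofReal_lt_top (ENNReal.inv_lt_top.mpr hx)
  have hgint : ∫ x in A, (g x).toReal ∂ν ≤ a := by
    rw [integral_toReal hgm.aemeasurable (ae_restrict_of_ae hglt)]
    have := ENNReal.toReal_mono
      (ENNReal.mul_ne_top ENNReal.ofReal_ne_top (measure_ne_top _ _)) hgl
    rw [ENNReal.toReal_mul, ENNReal.toReal_ofReal (by positivity)] at this
    calc (∫⁻ x in A, g x ∂ν).toReal ≤ a / b * b := this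
      _ = a := by field_simp
  -- pointwise bound
  have hpt : ∀ᵐ x ∂ν, (Real.log (a / b) + 1) - (g x).toReal
      ≤ Real.log (f x).toReal := by
    filter_upwards [hpos, hlt] with x h1 h2
    have hφ : 0 < (f x).toReal := ENNReal.toReal_pos h1.ne' h2.ne
    have hgx : (g x).toReal = (a / b) * ((f x).toReal)⁻¹ := by
      rw [hg, ENNReal.toReal_mul, ENNReal.toReal_ofReal (by positivity), ENNReal.toReal_inv]
    have h3 := Real.log_le_sub_one_of_pos (show (0:ℝ) < (a / b) / (f x).toReal by positivity)
    rw [Real.log_div (by positivity) hφ.ne'] at h3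
    rw [hgx]
    have : (a / b) / (f x).toReal = (a / b) * ((f x).toReal)⁻¹ := div_eq_mul_inv _ _
    linarith [this ▸ h3]
  -- integral mono
  have hmono : ∫ x in A, ((Real.log (a / b) + 1) - (g x).toReal) ∂ν
      ≤ ∫ x in A, Real.log (f x).toReal ∂ν := by
    exact integral_mono_ae ((integrable_const _).sub hgi) hint.restrict (ae_restrict_of_ae hpt)
  have hcalc : ∫ x in A, ((Real.log (a / b) + 1) - (g x).toReal) ∂ν
      = (Real.log (a / b) + 1) * a - ∫ x in A, (g x).toReal ∂ν := by
    rw [integral_sub (integrable_const _) hgi]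
    simp [haeq]
    rw [Measure.real]
    ring
  rw [hcalc] at hmono
  calc a * Real.log (a / b) ≤ (Real.log (a / b) + 1) * a - ∫ x in A, (g x).toReal ∂ν := by
        linarith
    _ ≤ ∫ x in A, Real.log (f x).toReal ∂ν := hmono

lemma log_measure_ge (ν μ : Measure ℝ) [IsProbabilityMeasure μ] [IsProbabilityMeasure ν]
    (hac : ν ≪ μ) (hint : Integrable (fun x => Real.log (ν.rnDeriv μ x).toReal) ν)
    {A : Set ℝ} (hA : MeasurableSet A) (hν0 : ν A ≠ 0) :
    Real.log (ν A).toReal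
      - ((∫ x, Real.log (ν.rnDeriv μ x).toReal ∂ν) + (Real.exp 1)⁻¹) / (ν A).toReal
      ≤ Real.log (μ A).toReal := by
  have hμ0 : μ A ≠ 0 := fun h => hν0 (hac h)
  set a : ℝ := (ν A).toReal with haeq
  set b : ℝ := (μ A).toReal with hbeq
  have ha : 0 < a := ENNReal.toReal_pos hν0 (measure_ne_top _ _)
  have hb : 0 < b := ENNReal.toReal_pos hμ0 (measure_ne_top _ _)
  set H : ℝ := ∫ x, Real.log (ν.rnDeriv μ x).toReal ∂ν with hH
  have hsplit : (∫ x in A, Real.log (ν.rnDeriv μ x).toReal ∂ν)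
      + ∫ x in Aᶜ, Real.log (ν.rnDeriv μ x).toReal ∂ν = H :=
    integral_add_compl hA hint
  -- lower bound on complement
  have hcompl : -(Real.exp 1)⁻¹ ≤ ∫ x in Aᶜ, Real.log (ν.rnDeriv μ x).toReal ∂ν := by
    refine le_trans ?_ (setIntegral_log_rnDeriv_ge ν μ hac hint hA.compl)
    set a' : ℝ := (ν Aᶜ).toReal with ha'
    set b' : ℝ := (μ Aᶜ).toReal with hb'
    rcases eq_or_lt_of_le (ENNReal.toReal_nonneg : (0:ℝ) ≤ a') with h | h
    · rw [ha', ← h]; simp; positivity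
    · have hb'0 : 0 < b' := by
        refine ENNReal.toReal_pos (fun hh => ?_) (measure_ne_top _ _)
        simp [hac hh] at h
      have hb'1 : b' ≤ 1 := by
        rw [hb']
        exact ENNReal.toReal_le_of_le_ofReal one_pos.le (by simpa using prob_le_one)
      have : Real.log a' ≤ Real.log (a' / b') := by
        rw [Real.log_div h.ne' hb'0.ne']
        have := Real.log_nonpos hb'0.le hb'1
        linarith
      calc -(Real.exp 1)⁻¹ ≤ a' * Real.log a' := mul_log_self_ge h.le
        _ ≤ a' * Real.log (a' / b') := mul_le_mul_of_nonneg_left this h.le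
  have hA' : a * Real.log (a / b) ≤ ∫ x in A, Real.log (ν.rnDeriv μ x).toReal ∂ν :=
    setIntegral_log_rnDeriv_ge ν μ hac hint hA
  have hkey : a * (Real.log a - Real.log b) ≤ H + (Real.exp 1)⁻¹ := by
    rw [← Real.log_div ha.ne' hb.ne']
    linarith
  rw [sub_le_iff_le_add, ← sub_le_iff_le_add']
  calc Real.log a - Real.log b ≤ (H + (Real.exp 1)⁻¹) / a := by
        rw [le_div_iff₀ ha]; linarith
    _ = (H + (Real.exp 1)⁻¹) / a := rfl

/-- If `ν_t ⇀ δ_j` weakly and `limsup (1/t) H(ν_t|μ_t) ≤ c`, then for every open set `O`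
containing `j`, `liminf (1/t) log μ_t(O) ≥ −c`. -/
theorem liminf_log_measure_ge_of_relEnt
    (μt νt : ℝ → Measure ℝ)
    (hμ : ∀ t, IsProbabilityMeasure (μt t)) (hν : ∀ t, IsProbabilityMeasure (νt t))
    (j c : ℝ) (hc : 0 ≤ c)
    (hweak : ∀ g : BoundedContinuousFunction ℝ ℝ,
      Tendsto (fun t : ℝ => ∫ x, g x ∂(νt t)) atTop (nhds (g j)))
    (hent : Filter.limsup
        (fun t : ℝ => ENNReal.ofReal (1 / t) * relEnt (νt t) (μt t)) atTop
      ≤ ENNReal.ofReal c) :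
    ∀ O : Set ℝ, IsOpen O → j ∈ O →
      (-(c : EReal)) ≤
        Filter.liminf (fun t : ℝ => ((1 / t : ℝ) : EReal) * ENNReal.log (μt t O)) atTop := by
  intro O hO hjO
  have := fun t => hμ t
  have := fun t => hν t
  -- Urysohn function
  obtain ⟨f, hf0, hf1, hf01⟩ := exists_continuous_zero_one_of_isClosed
    (isClosed_compl_iff.mpr hO) isClosed_singleton
    (Set.disjoint_left.mpr fun x hx hx' => hx (Set.mem_singleton_iff.mp hx' ▸ hjO))
  set G : BoundedContinuousFunction ℝ ℝ :=
    ⟨f, 1, fun x y => by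
      have h1 := hf01 x; have h2 := hf01 y
      rw [Real.dist_eq, abs_le]
      simp only [ContinuousMap.toFun_eq_coe]
      constructor
      · linarith [h1.1, h2.2]
      · linarith [h1.2, h2.1]⟩ with hG
  have hGapp : ∀ x, G x = f x := fun x => rfl
  have hGj : G j = 1 := hf1 (Set.mem_singleton j)
  -- ∫ G ≤ ν O
  have hle : ∀ t, ∫ x, G x ∂(νt t) ≤ ((νt t) O).toReal := by
    intro t
    have hint : Integrable G (νt t) := G.integrable _
    rw [show (fun x => G x) = ⇑G from rfl, ← integral_add_compl hO.measurableSet hint]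
    have hG0 : Set.EqOn (⇑G) 0 Oᶜ := hf0
    have h2 : ∫ x in Oᶜ, G x ∂(νt t) = 0 := by
      rw [setIntegral_congr_fun hO.measurableSet.compl hG0]
      simp
    have h1 : ∫ x in O, G x ∂(νt t) ≤ ∫ x in O, (1 : ℝ) ∂(νt t) :=
      setIntegral_mono_on hint.integrableOn (integrable_const _) hO.measurableSet
        fun x _ => (hf01 x).2
    rw [h2, add_zero]
    refine h1.trans ?_
    simp
    exact le_rfl
  -- ν_t O → 1
  have htend1 : Tendsto (fun t => ((νt t) O).toReal) atTop (𝓝 1) := by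
    refine tendsto_of_tendsto_of_tendsto_of_le_of_le (f := fun t => ((νt t) O).toReal)
      ?_ tendsto_const_nhds hle (fun t => ?_)
    · simpa [hGj] using hweak G
    · exact ENNReal.toReal_le_of_le_ofReal one_pos.le (by simpa using prob_le_one)
  set L := Filter.liminf (fun t : ℝ => ((1 / t : ℝ) : EReal) * ENNReal.log (μt t O)) atTop
    with hLdef
  suffices hδ : ∀ δ : ℝ, 0 < δ → ((-(c + 2*δ) : ℝ) : EReal) ≤ L by
    have h1 : Tendsto (fun δ : ℝ => (-(c + 2*δ) : ℝ)) (nhdsWithin 0 (Set.Ioi 0)) (𝓝 (-c)) := by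
      have h2 : Tendsto (fun δ : ℝ => (-(c + 2*δ) : ℝ)) (𝓝 0) (𝓝 (-(c + 2*0))) := by
        apply Continuous.tendsto
        continuity
      simpa using h2.mono_left nhdsWithin_le_nhds
    have hcont : Tendsto (fun δ : ℝ => ((-(c + 2*δ) : ℝ) : EReal)) (nhdsWithin 0 (Set.Ioi 0))
        (𝓝 ((-c : ℝ) : EReal)) := (continuous_coe_real_ereal.tendsto _).comp h1
    have := le_of_tendsto hcont (eventually_mem_nhdsWithin.mono fun δ hδ' => hδ δ hδ')
    simpa using this
  intro δ hδpos
  -- entropy facts eventually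
  have hev1 : ∀ᶠ t : ℝ in atTop,
      (νt t ≪ μt t) ∧ Integrable (fun x => Real.log ((νt t).rnDeriv (μt t) x).toReal) (νt t) ∧
      (1/t) * (∫ x, Real.log ((νt t).rnDeriv (μt t) x).toReal ∂(νt t)) ≤ c + δ := by
    have hlt : Filter.limsup
        (fun t : ℝ => ENNReal.ofReal (1 / t) * relEnt (νt t) (μt t)) atTop
        < ENNReal.ofReal (c + δ) := by
      refine lt_of_le_of_lt hent ?_
      rw [ENNReal.ofReal_add hc hδpos.le]
      exact ENNReal.lt_add_right ENNReal.ofReal_ne_top (ENNReal.ofReal_pos.mpr hδpos).ne'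
    filter_upwards [eventually_lt_of_limsup_lt hlt, eventually_gt_atTop 0] with t hlt' ht
    have h1t : (0:ℝ) < 1/t := by positivity
    have hne : ¬ (ENNReal.ofReal (1/t) * relEnt (νt t) (μt t) = ⊤) := hlt'.ne_top
    by_cases hcond : (νt t ≪ μt t) ∧
        Integrable (fun x => Real.log ((νt t).rnDeriv (μt t) x).toReal) (νt t)
    · refine ⟨hcond.1, hcond.2, ?_⟩
      rw [relEnt, if_pos hcond] at hlt'
      rw [← ENNReal.ofReal_mul h1t.le] at hlt'
      exact (ENNReal.ofReal_le_ofReal_iff (by linarith)).mp hlt'.le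
    · exfalso
      apply hne
      rw [relEnt, if_neg hcond, ENNReal.mul_top]
      simp only [ne_eq, ENNReal.ofReal_eq_zero, not_le]
      exact h1t
  -- ν_t O ≥ 1/2 eventually
  have hev2 : ∀ᶠ t : ℝ in atTop, 1/2 ≤ ((νt t) O).toReal :=
    htend1.eventually (eventually_ge_nhds (by norm_num))
  -- the asymptotic lower bound function
  set F : ℝ → ℝ := fun t => (1/t) * Real.log ((νt t O).toReal)
      - (c + δ + (1/t) * (Real.exp 1)⁻¹) / ((νt t O).toReal) with hFdef
  have h1t0 : Tendsto (fun t : ℝ => 1/t) atTop (𝓝 0) := by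
    simpa [one_div] using tendsto_inv_atTop_zero (𝕜 := ℝ)
  have hloga : Tendsto (fun t => Real.log ((νt t O).toReal)) atTop (𝓝 0) := by
    have := (Real.continuousAt_log one_ne_zero).tendsto.comp htend1
    simpa [Function.comp_def] using this
  have hF : Tendsto F atTop (𝓝 (0 * 0 - (c + δ + 0 * (Real.exp 1)⁻¹) / 1)) := by
    exact (h1t0.mul hloga).sub
      (((tendsto_const_nhds.add (h1t0.mul_const _))).div htend1 one_ne_zero)
  have hFlim : Tendsto F atTop (𝓝 (-(c + δ))) := by
    convert hF using 2
    norm_num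
  have hFev : ∀ᶠ t : ℝ in atTop, -(c + 2*δ) ≤ F t :=
    hFlim.eventually (eventually_ge_nhds (by linarith))
  have hmain : ∀ᶠ t : ℝ in atTop,
      ((-(c + 2*δ) : ℝ) : EReal) ≤ ((1 / t : ℝ) : EReal) * ENNReal.log (μt t O) := by
    filter_upwards [hev1, hev2, hFev, eventually_gt_atTop 0] with t hh ha2 hFt ht
    obtain ⟨hac, hint, hent'⟩ := hh
    have ha : 0 < ((νt t) O).toReal := lt_of_lt_of_le one_half_pos ha2
    have hν0 : νt t O ≠ 0 := by
      intro h
      rw [h] at ha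
      simp at ha
    have hμ0 : μt t O ≠ 0 := fun h => hν0 (hac h)
    have hlog := log_measure_ge (νt t) (μt t) hac hint hO.measurableSet hν0
    have h1t : (0:ℝ) < 1/t := by positivity
    set a : ℝ := ((νt t) O).toReal
    set H : ℝ := ∫ x, Real.log ((νt t).rnDeriv (μt t) x).toReal ∂(νt t)
    set E : ℝ := (Real.exp 1)⁻¹
    have hE : 0 ≤ E := by positivity
    have hmul : F t ≤ (1/t) * Real.log ((μt t) O).toReal := by
      have h2 := mul_le_mul_of_nonneg_left hlog h1t.le
      have e1 : (1/t) * (Real.log a - (H + E)/a)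
          = (1/t) * Real.log a - ((1/t)*H + (1/t)*E)/a := by ring
      rw [e1] at h2
      have e2 : ((1/t)*H + (1/t)*E)/a ≤ (c + δ + (1/t)*E)/a := by
        gcongr
      have e3 : F t ≤ (1/t) * Real.log a - ((1/t)*H + (1/t)*E)/a := by
        rw [hFdef]
        simp only
        linarith
      linarith
    have hleE : ENNReal.log (μt t O) = ((Real.log ((μt t) O).toReal : ℝ) : EReal) := by
      rw [ENNReal.log, if_neg hμ0, if_neg (measure_ne_top _ _)]
    rw [hleE, ← EReal.coe_mul]
    exact_mod_cast le_trans hFt hmul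
  exact le_liminf_of_le (by isBoundedDefault) hmain
end
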